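/- arXiv:2307.02204 — 9 statements merged into one kernel-verified Lean document; each statement's English description precedes it below -/
import Mathlib

section
/- Let H_S and H_I be complex Hilbert spaces, (ξ_n)_{n∈ℕ} an orthonormal family in H_I, r : ℕ → ℂ, and for each n let θ ↦ φ_n(θ) ∈ H_S be differentiable. Assume Σ_n |r_n|²‖φ_n(θ)‖² converges, set N(θ) := 1 − Σ_n |r_n|²‖φ_n(θ)‖², assume 0 ≤ N(θ) < 1, and assume the map θ ↦ Σ_n r_n φ_n(θ) ⊗ ξ_n is norm-convergent and differentiable with derivative Σ_n r_n (∂_θφ_n)(θ) ⊗ ξ_n (also norm-convergent). Define Φ(θ) := (1 − N(θ))^{−1/2} Σ_n r_n φ_n(θ) ⊗ ξ_n. Then Φ(θ) is a unit vector and its pure-state quantum Fisher information equals Q(θ; Φ) = (4/(1−N(θ))) Σ_n |r_n|² ‖∂_θφ_n(θ)‖² − (4/(1−N(θ))²) |Σ_n |r_n|² ⟨φ_n(θ), ∂_θφ_n(θ)⟩|². -/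
open ComplexConjugate

private lemma hasSum_inner_orth {E : Type*} [NormedAddCommGroup E] [InnerProductSpace ℂ E]
    {u v : ℕ → E} {x y : E} (hu : HasSum u x) (hv : HasSum v y)
    (h : ∀ n m, n ≠ m → (inner ℂ (u n) (v m) : ℂ) = 0) :
    HasSum (fun n => (inner ℂ (u n) (v n) : ℂ)) (inner ℂ x y) := by
  have h1 : HasSum (fun m => (inner ℂ x (v m) : ℂ)) (inner ℂ x y) := hv.mapL (innerSL ℂ x)
  have h2 : ∀ m, (inner ℂ x (v m) : ℂ) = inner ℂ (u m) (v m) := by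
    intro m
    have h3 : HasSum (fun n => (inner ℂ (v m) (u n) : ℂ)) (inner ℂ (v m) x) := hu.mapL (innerSL ℂ (v m))
    have h4 : HasSum (fun n => (inner ℂ (v m) (u n) : ℂ)) (inner ℂ (v m) (u m)) :=
      hasSum_single m (fun n hn => by rw [← inner_conj_symm, h n m hn, map_zero])
    calc (inner ℂ x (v m) : ℂ) = conj (inner ℂ (v m) x) := (inner_conj_symm _ _).symm
      _ = conj (inner ℂ (v m) (u m)) := by rw [h3.unique h4]
      _ = inner ℂ (u m) (v m) := inner_conj_symm _ _
  simpa [h2] using h1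

private lemma inner_self_C {E : Type*} [NormedAddCommGroup E] [InnerProductSpace ℂ E]
    (x : E) : (inner ℂ x x : ℂ) = ((‖x‖ ^ 2 : ℝ) : ℂ) := by
  rw [inner_self_eq_norm_sq_to_K]; norm_cast

/-- For a biphoton state `Φ(θ) = (1-N(θ))^{-1/2} Σₙ rₙ φₙ(θ) ⊗ ξₙ` with
`(ξₙ)` an orthonormal family of the idler space, the state is normalised and its pure-state
quantum Fisher information is
`Q = 4/(1-N) Σₙ |rₙ|² ‖∂φₙ‖² - 4/(1-N)² |Σₙ |rₙ|² ⟨φₙ, ∂φₙ⟩|²`.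
The tensor product is encoded abstractly by a bilinear map `tens : H_S → H_I → E` satisfying
the characteristic inner-product identity of the Hilbert tensor product. -/
theorem biphoton_outgoing_QFI
    {H_S H_I E : Type*}
    [NormedAddCommGroup H_S] [InnerProductSpace ℂ H_S]
    [NormedAddCommGroup H_I] [InnerProductSpace ℂ H_I]
    [NormedAddCommGroup E] [InnerProductSpace ℂ E]
    (tens : H_S →ₗ[ℂ] H_I →ₗ[ℂ] E)
    (htens : ∀ (a : H_S) (b : H_I) (c : H_S) (d : H_I),
      (inner ℂ (tens a b) (tens c d) : ℂ) = (inner ℂ a c : ℂ) * (inner ℂ b d : ℂ))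
    (ξ : ℕ → H_I) (hξ : Orthonormal ℂ ξ)
    (r : ℕ → ℂ) (φ φd : ℕ → ℝ → H_S)
    (hφ : ∀ n t, HasDerivAt (φ n) (φd n t) t)
    (θ : ℝ)
    (hsum : ∀ t, Summable fun n => ‖r n‖ ^ 2 * ‖φ n t‖ ^ 2)
    (N : ℝ → ℝ) (hN : ∀ t, N t = 1 - ∑' n, ‖r n‖ ^ 2 * ‖φ n t‖ ^ 2)
    (hN0 : 0 ≤ N θ) (hN1 : N θ < 1)
    (S D : ℝ → E)
    (hS : ∀ t, HasSum (fun n => r n • tens (φ n t) (ξ n)) (S t))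
    (hD : ∀ t, HasSum (fun n => r n • tens (φd n t) (ξ n)) (D t))
    (hSD : ∀ t, HasDerivAt S (D t) t)
    (Φ : ℝ → E) (hΦ : ∀ t, Φ t = ((Real.sqrt (1 - N t) : ℝ) : ℂ)⁻¹ • S t) :
    ‖Φ θ‖ = 1 ∧
      ∃ Φd : E, HasDerivAt Φ Φd θ ∧
        4 * (‖Φd‖ ^ 2 - ‖(inner ℂ (Φ θ) Φd : ℂ)‖ ^ 2) =
          4 / (1 - N θ) * ∑' n, ‖r n‖ ^ 2 * ‖φd n θ‖ ^ 2
            - 4 / (1 - N θ) ^ 2 *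
              ‖(∑' n, ((‖r n‖ ^ 2 : ℝ) : ℂ) * (inner ℂ (φ n θ) (φd n θ) : ℂ))‖ ^ 2 := by
  have key : ∀ (a b : H_S) (n m : ℕ),
      (inner ℂ (r n • tens a (ξ n)) (r m • tens b (ξ m)) : ℂ)
        = conj (r n) * r m * (inner ℂ a b : ℂ) * (inner ℂ (ξ n) (ξ m) : ℂ) := by
    intro a b n m
    rw [inner_smul_left, inner_smul_right, htens]; ring
  have korth : ∀ (a b : ℕ → H_S) (n m : ℕ), n ≠ m →
      (inner ℂ (r n • tens (a n) (ξ n)) (r m • tens (b m) (ξ m)) : ℂ) = 0 := by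
    intro a b n m hnm
    rw [key, hξ.2 hnm, mul_zero]
  have kdiag : ∀ (a b : H_S) (n : ℕ),
      (inner ℂ (r n • tens a (ξ n)) (r n • tens b (ξ n)) : ℂ)
        = ((‖r n‖ ^ 2 : ℝ) : ℂ) * (inner ℂ a b : ℂ) := by
    intro a b n
    have h1 : (inner ℂ (ξ n) (ξ n) : ℂ) = 1 := by
      rw [inner_self_C, hξ.1 n]; norm_num
    rw [key, h1, mul_one, mul_comm (conj (r n)) (r n), RCLike.mul_conj]
    norm_cast
  -- key sums
  have hSS : ∀ t, HasSum (fun n => ‖r n‖ ^ 2 * ‖φ n t‖ ^ 2) (‖S t‖ ^ 2) := by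
    intro t
    have h0 := hasSum_inner_orth (hS t) (hS t) (korth (fun n => φ n t) (fun n => φ n t))
    rw [inner_self_C] at h0
    have h1 : ∀ n, (inner ℂ (r n • tens (φ n t) (ξ n)) (r n • tens (φ n t) (ξ n)) : ℂ)
        = ((‖r n‖ ^ 2 * ‖φ n t‖ ^ 2 : ℝ) : ℂ) := by
      intro n; rw [kdiag, inner_self_C]; push_cast; ring
    rw [funext h1] at h0
    exact Complex.hasSum_ofReal.mp (by push_cast at h0 ⊢; exact h0)
  have hDD : HasSum (fun n => ‖r n‖ ^ 2 * ‖φd n θ‖ ^ 2) (‖D θ‖ ^ 2) := by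
    have h0 := hasSum_inner_orth (hD θ) (hD θ) (korth (fun n => φd n θ) (fun n => φd n θ))
    rw [inner_self_C] at h0
    have h1 : ∀ n, (inner ℂ (r n • tens (φd n θ) (ξ n)) (r n • tens (φd n θ) (ξ n)) : ℂ)
        = ((‖r n‖ ^ 2 * ‖φd n θ‖ ^ 2 : ℝ) : ℂ) := by
      intro n; rw [kdiag, inner_self_C]; push_cast; ring
    rw [funext h1] at h0
    exact Complex.hasSum_ofReal.mp (by push_cast at h0 ⊢; exact h0)
  have hC : HasSum (fun n => ((‖r n‖ ^ 2 : ℝ) : ℂ) * (inner ℂ (φ n θ) (φd n θ) : ℂ))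
      (inner ℂ (S θ) (D θ)) := by
    have h0 := hasSum_inner_orth (hS θ) (hD θ) (korth (fun n => φ n θ) (fun n => φd n θ))
    have h1 : ∀ n, (inner ℂ (r n • tens (φ n θ) (ξ n)) (r n • tens (φd n θ) (ξ n)) : ℂ)
        = ((‖r n‖ ^ 2 : ℝ) : ℂ) * (inner ℂ (φ n θ) (φd n θ) : ℂ) := fun n => kdiag _ _ n
    rwa [funext h1] at h0
  -- norm of S and normalization
  have hnSq : ∀ t, 1 - N t = ‖S t‖ ^ 2 := by
    intro t; rw [hN t, (hSS t).tsum_eq]; ring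
  have hs2 : (0:ℝ) < ‖S θ‖ ^ 2 := by rw [← hnSq θ]; linarith
  have hs : (0:ℝ) < ‖S θ‖ := by
    rcases (norm_nonneg (S θ)).lt_or_eq with h | h
    · exact h
    · exfalso; rw [← h] at hs2; simp at hs2
  have hΦ' : Φ = fun t => ((‖S t‖ : ℝ) : ℂ)⁻¹ • S t := by
    funext t
    rw [hΦ t, hnSq t, Real.sqrt_sq (norm_nonneg _)]
  have hnorm : ‖Φ θ‖ = 1 := by
    rw [hΦ']
    simp only [norm_smul, norm_inv, Complex.norm_real, Real.norm_eq_abs,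
      abs_of_pos hs]
    exact inv_mul_cancel₀ (ne_of_gt hs)
  refine ⟨hnorm, ?_⟩
  -- derivative of Φ
  set s : ℝ := ‖S θ‖ with hsdef
  set c : ℂ := inner ℂ (S θ) (D θ) with hcdef
  set a : ℝ := c.re with hadef
  have hderivSq : HasDerivAt (fun t => ‖S t‖ ^ 2) (2 * a) θ := by
    have := @HasDerivAt.norm_sq E _ (InnerProductSpace.rclikeToReal ℂ E) S (D θ) θ (hSD θ)
    convert this using 1
    rfl
  have hderivnorm : HasDerivAt (fun t => ‖S t‖) (a / s) θ := by
    have h1 := (Real.hasDerivAt_sqrt (ne_of_gt hs2)).comp θ hderivSq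
    have h2 : (fun t => Real.sqrt (‖S t‖ ^ 2)) = fun t => ‖S t‖ := by
      funext t; exact Real.sqrt_sq (norm_nonneg _)
    simp only [Function.comp_def] at h1
    rw [h2] at h1
    refine h1.congr_deriv ?_
    rw [Real.sqrt_sq hs.le]
    field_simp
  have hderivinv : HasDerivAt (fun t => (‖S t‖)⁻¹) (-(a / s) / s ^ 2) θ :=
    hderivnorm.inv (ne_of_gt hs)
  have hderivinvC : HasDerivAt (fun t => ((‖S t‖ : ℝ) : ℂ)⁻¹)
      ((-(a / s) / s ^ 2 : ℝ) : ℂ) θ := by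
    have := hderivinv.ofReal_comp
    simpa [Complex.ofReal_inv] using this
  have hΦd : HasDerivAt Φ
      ((((‖S θ‖ : ℝ) : ℂ))⁻¹ • D θ + ((-(a / s) / s ^ 2 : ℝ) : ℂ) • S θ) θ := by
    rw [hΦ']
    exact hderivinvC.smul (hSD θ)
  set Φd : E := ((((‖S θ‖ : ℝ) : ℂ))⁻¹ • D θ + ((-(a / s) / s ^ 2 : ℝ) : ℂ) • S θ) with hΦddef
  refine ⟨Φd, hΦd, ?_⟩
  -- compute the inner ℂ products
  have hDS : (inner ℂ (D θ) (S θ) : ℂ) = conj c := by rw [hcdef, inner_conj_symm]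
  have hipC : (inner ℂ (Φ θ) Φd : ℂ) = ((s ^ 2 : ℝ) : ℂ)⁻¹ * c - ((a / s ^ 2 : ℝ) : ℂ) := by
    rw [hΦ', hΦddef]
    simp only [inner_add_right, inner_smul_left, inner_smul_right, map_inv₀,
      Complex.conj_ofReal, inner_self_C, ← hcdef, ← hsdef]
    have hsne : ((s:ℂ)) ≠ 0 := by exact_mod_cast ne_of_gt hs
    push_cast
    field_simp [hsne]
    ring
  have hΦdnorm : ‖Φd‖ ^ 2 = ‖D θ‖ ^ 2 / s ^ 2 - a ^ 2 / s ^ 4 := by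
    have h0 : ((‖Φd‖ ^ 2 : ℝ) : ℂ) = inner ℂ Φd Φd := (inner_self_C Φd).symm
    have h1 : (inner ℂ Φd Φd : ℂ)
        = ((‖D θ‖ ^ 2 / s ^ 2 - a ^ 2 / s ^ 4 : ℝ) : ℂ) := by
      rw [hΦddef]
      simp only [inner_add_left, inner_add_right, inner_smul_left, inner_smul_right, map_inv₀,
        Complex.conj_ofReal, inner_self_C, ← hcdef, hDS, ← hsdef]
      have hsne : ((s:ℂ)) ≠ 0 := by exact_mod_cast ne_of_gt hs
      have hconj : (starRingEnd ℂ) c = ((2 * a : ℝ) : ℂ) - c := by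
        rw [← Complex.add_conj]; ring
      rw [hconj]
      push_cast
      field_simp [hsne]
      have h12 : ((s:ℂ)) ^ 12 * ((s:ℂ))⁻¹ ^ 12 = 1 := by
        rw [← mul_pow, mul_inv_cancel₀ hsne, one_pow]
      ring
    exact_mod_cast h0.trans h1
  have hsne' : s ≠ 0 := ne_of_gt hs
  have habs1 : ‖(inner ℂ (Φ θ) Φd : ℂ)‖ ^ 2 = c.im ^ 2 / s ^ 4 := by
    rw [hipC, ← Complex.ofReal_inv, Complex.sq_norm, Complex.normSq_apply]
    simp only [Complex.sub_re, Complex.sub_im, Complex.ofReal_re, Complex.ofReal_im,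
      Complex.re_ofReal_mul, Complex.im_ofReal_mul]
    rw [← hadef]
    field_simp
    ring
  have habs2 : ‖(∑' n, ((‖r n‖ ^ 2 : ℝ) : ℂ) * (inner ℂ (φ n θ) (φd n θ) : ℂ))‖ ^ 2
      = a ^ 2 + c.im ^ 2 := by
    rw [hC.tsum_eq, Complex.sq_norm, Complex.normSq_apply, ← hadef]
    ring
  rw [hΦdnorm, habs1, habs2, hDD.tsum_eq, hnSq θ, ← hsdef]
  field_simp
  ring
end

section
/- Let θ ↦ ψ(θ) ∈ ℂ^d be a differentiable family of unit vectors, θ ↦ σ(θ) a differentiable family of d×d positive semidefinite matrices with trace 1, θ ↦ N(θ) ∈ (0,1) differentiable, and let P be a fixed d×d orthogonal projection such that for all θ: Pψ(θ) = 0, P(∂_θψ)(θ) = 0, and Pσ(θ) = σ(θ)P = σ(θ). Set ρ(θ) := (1 − N(θ)) ψ(θ)ψ(θ)* + N(θ) σ(θ). If L and L_σ are Hermitian matrices satisfying the Lyapunov equations Lρ(θ) + ρ(θ)L = 2∂_θρ(θ) and L_σσ(θ) + σ(θ)L_σ = 2∂_θσ(θ), then Tr(ρ(θ)L²) = (∂_θN)²/(N(1−N))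 + N·Tr(σ(θ)L_σ²) + (1−N)·4(‖∂_θψ‖² − |⟨ψ, ∂_θψ⟩|²). -/
open Matrix ComplexConjugate

namespace QFIAux
variable {n : Type*} [Fintype n]

lemma trace_vecMulVec_mul (x y : n → ℂ) (A : Matrix n n ℂ) :
    (Matrix.vecMulVec x y * A).trace = y ⬝ᵥ (A *ᵥ x) := by
  simp only [Matrix.trace, Matrix.diag, Matrix.mul_apply, Matrix.vecMulVec_apply,
    dotProduct, Matrix.mulVec]
  rw [Finset.sum_comm]
  exact Finset.sum_congr rfl fun j _ => by
    rw [Finset.mul_sum]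
    exact Finset.sum_congr rfl fun i _ => by ring

lemma vecMulVec_mulVec' (x y z : n → ℂ) :
    Matrix.vecMulVec x y *ᵥ z = (y ⬝ᵥ z) • x := by
  ext i
  simp only [Matrix.mulVec, dotProduct, Matrix.vecMulVec_apply, Pi.smul_apply,
    smul_eq_mul, Finset.sum_mul]
  exact Finset.sum_congr rfl fun j _ => by ring

lemma mul_vecMulVec (A : Matrix n n ℂ) (x y : n → ℂ) :
    A * Matrix.vecMulVec x y = Matrix.vecMulVec (A *ᵥ x) y := by
  ext i j
  simp only [Matrix.mul_apply, Matrix.vecMulVec_apply, Matrix.mulVec, dotProduct,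
    Finset.sum_mul]
  exact Finset.sum_congr rfl fun k _ => by ring

lemma vecMulVec_mul' (x y : n → ℂ) (A : Matrix n n ℂ) :
    Matrix.vecMulVec x y * A = Matrix.vecMulVec x (y ᵥ* A) := by
  ext i j
  simp only [Matrix.mul_apply, Matrix.vecMulVec_apply, Matrix.vecMul, dotProduct,
    Finset.mul_sum]
  exact Finset.sum_congr rfl fun k _ => by ring

lemma vecMulVec_zero_left (y : n → ℂ) : Matrix.vecMulVec (0 : n → ℂ) y = 0 := by
  ext i j; simp [Matrix.vecMulVec_apply]

lemma vecMulVec_zero_right (x : n → ℂ) : Matrix.vecMulVec x (0 : n → ℂ) = 0 := by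
  ext i j; simp [Matrix.vecMulVec_apply]

lemma star_dot_comm (x y : n → ℂ) : star x ⬝ᵥ y = conj (star y ⬝ᵥ x) := by
  simp only [dotProduct, map_sum]
  exact Finset.sum_congr rfl fun i _ => by
    simp only [Pi.star_apply, RCLike.star_def, _root_.map_mul, Complex.conj_conj]
    ring

lemma herm_dot {A : Matrix n n ℂ} (hA : A.IsHermitian) (x w : n → ℂ) :
    star x ⬝ᵥ (A *ᵥ w) = star (A *ᵥ x) ⬝ᵥ w := by
  rw [dotProduct_mulVec, Matrix.star_mulVec, hA.eq]

lemma herm_sandwich_conj {A : Matrix n n ℂ} (hA : A.IsHermitian) (x y : n → ℂ) :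
    star x ⬝ᵥ (A *ᵥ y) = conj (star y ⬝ᵥ (A *ᵥ x)) := by
  rw [herm_dot hA, star_dot_comm]

lemma vecMulVec_conjT (x y : n → ℂ) :
    (Matrix.vecMulVec x y)ᴴ = Matrix.vecMulVec (star y) (star x) := by
  ext i j
  simp only [Matrix.conjTranspose_apply, Matrix.vecMulVec_apply, Pi.star_apply, star_mul']
  ring

end QFIAux

open ComplexConjugate QFIAux
open scoped ComplexOrder

/-- Three-term decomposition of the quantum Fisher information of
`ρ(θ) = (1-N(θ)) ψψ* + N(θ) σ(θ)` where the pure part `ψ` and the mixed part `σ` live in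
mutually orthogonal subspaces (enforced by a projection `P`):
`Tr(ρL²) = (∂N)²/(N(1-N)) + N·Tr(σ Lσ²) + (1-N)·4(‖∂ψ‖² - |⟨ψ,∂ψ⟩|²)`. -/
theorem QFI_three_term_decomposition
    {d : ℕ}
    (ψ : ℝ → EuclideanSpace ℂ (Fin d)) (ψd : EuclideanSpace ℂ (Fin d))
    (θ : ℝ)
    (hψunit : ∀ t, ‖ψ t‖ = 1)
    (hψdiff : ∀ t, DifferentiableAt ℝ ψ t)
    (hψd : HasDerivAt ψ ψd θ)
    (σ : ℝ → Matrix (Fin d) (Fin d) ℂ)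
    (hσpsd : ∀ t, (σ t).PosSemidef) (hσtr : ∀ t, (σ t).trace = 1)
    (σ' : Matrix (Fin d) (Fin d) ℂ)
    (hσdiff : ∀ t i j, DifferentiableAt ℝ (fun u => σ u i j) t)
    (hσ' : ∀ i j, HasDerivAt (fun t => σ t i j) (σ' i j) θ)
    (N : ℝ → ℝ) (hN : ∀ t, N t ∈ Set.Ioo (0 : ℝ) 1)
    (hNdiff : ∀ t, DifferentiableAt ℝ N t)
    (N' : ℝ) (hN' : HasDerivAt N N' θ)
    (P : Matrix (Fin d) (Fin d) ℂ) (hPH : P.IsHermitian) (hPproj : P * P = P)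
    (hPψ : ∀ t, P.mulVec (fun i => ψ t i) = 0)
    (hPψd : P.mulVec (fun i => ψd i) = 0)
    (hPσ : ∀ t, P * σ t = σ t ∧ σ t * P = σ t)
    (ρ : ℝ → Matrix (Fin d) (Fin d) ℂ)
    (hρ : ∀ t, ρ t =
      ((1 - N t : ℝ) : ℂ) • Matrix.vecMulVec (fun i => ψ t i) (fun j => conj (ψ t j))
        + ((N t : ℝ) : ℂ) • σ t)
    (ρ' : Matrix (Fin d) (Fin d) ℂ)
    (hρ' : ∀ i j, HasDerivAt (fun t => ρ t i j) (ρ' i j) θ)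
    (L Lσ : Matrix (Fin d) (Fin d) ℂ)
    (hL : L.IsHermitian) (hLσ : Lσ.IsHermitian)
    (hLyap : L * ρ θ + ρ θ * L = (2 : ℂ) • ρ')
    (hLyapσ : Lσ * σ θ + σ θ * Lσ = (2 : ℂ) • σ') :
    (ρ θ * L * L).trace =
      ((N' ^ 2 / (N θ * (1 - N θ)) : ℝ) : ℂ)
        + ((N θ : ℝ) : ℂ) * (σ θ * Lσ * Lσ).trace
        + ((1 - N θ : ℝ) : ℂ) *
            ((4 * (‖ψd‖ ^ 2 - ‖(inner ℂ (ψ θ) ψd : ℂ)‖ ^ 2) : ℝ) : ℂ) := by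
  -- abbreviations
  set u : Fin d → ℂ := fun i => ψ θ i with hu
  set v : Fin d → ℂ := fun i => ψd i with hv
  set Nc : ℂ := ((N θ : ℝ) : ℂ) with hNc_def
  set Mc : ℂ := ((1 - N θ : ℝ) : ℂ) with hMc_def
  set N'c : ℂ := ((N' : ℝ) : ℂ) with hN'c_def
  set W : Matrix (Fin d) (Fin d) ℂ := Matrix.vecMulVec u (star u) with hW
  set Wvu : Matrix (Fin d) (Fin d) ℂ := Matrix.vecMulVec v (star u) with hWvu
  set Wuv : Matrix (Fin d) (Fin d) ℂ := Matrix.vecMulVec u (star v) with hWuv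
  set c : ℂ := star u ⬝ᵥ v with hc
  set n2 : ℂ := ((‖ψd‖ : ℝ) : ℂ) ^ 2 with hn2
  set A2 : ℂ := ((‖(inner ℂ (ψ θ) ψd : ℂ)‖ : ℝ) : ℂ) ^ 2 with hA2
  set a : ℂ := star u ⬝ᵥ L *ᵥ u with ha
  set b : ℂ := star u ⬝ᵥ L *ᵥ v with hb
  set s : ℂ := (σ θ * Lσ * Lσ).trace with hs
  set tσL : ℂ := (σ θ * L).trace with htσL
  -- nonvanishing
  have hN0 := (hN θ).1
  have hN1 := (hN θ).2
  have zN : Nc ≠ 0 := by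
    simp only [hNc_def, ne_eq, Complex.ofReal_eq_zero]; linarith
  have zM : Mc ≠ 0 := by
    simp only [hMc_def, ne_eq, Complex.ofReal_eq_zero]; linarith
  have hMN : Mc = 1 - Nc := by rw [hMc_def, hNc_def]; push_cast; ring
  -- component derivatives
  have hcomp : ∀ i, HasDerivAt (fun t => ψ t i) (ψd i) θ := fun i =>
    ((EuclideanSpace.proj (𝕜 := ℂ) i).restrictScalars ℝ).hasFDerivAt.comp_hasDerivAt θ hψd
  have hconj : ∀ j, HasDerivAt (fun t => conj (ψ t j)) (conj (ψd j)) θ := fun j =>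
    (hcomp j).star
  have hNcD : HasDerivAt (fun t => ((N t : ℝ) : ℂ)) N'c θ :=
    Complex.ofRealCLM.hasFDerivAt.comp_hasDerivAt θ hN'
  have h1NcD : HasDerivAt (fun t => ((1 - N t : ℝ) : ℂ)) (-N'c) θ := by
    have h := (hasDerivAt_const θ (1 : ℂ)).fun_sub hNcD
    simp only [zero_sub] at h
    convert h using 2 with t
    push_cast; rfl
    push_cast; ring
  -- basic inner-product facts
  have hinner_dot : ∀ x y : EuclideanSpace ℂ (Fin d),
      (inner ℂ x y : ℂ) = star (fun i => x i) ⬝ᵥ (fun i => y i) := by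
    intro x y
    simp only [PiLp.inner_apply, RCLike.inner_apply, dotProduct, Pi.star_apply,
      RCLike.star_def]
    exact Finset.sum_congr rfl fun _ _ => mul_comm _ _
  have huu : star u ⬝ᵥ u = 1 := by
    have h := inner_self_eq_norm_sq_to_K (𝕜 := ℂ) (ψ θ)
    rw [hψunit θ, hinner_dot (ψ θ) (ψ θ)] at h
    rw [hu]
    rw [h]; norm_num
  have hvv : star v ⬝ᵥ v = n2 := by
    have h := inner_self_eq_norm_sq_to_K (𝕜 := ℂ) ψd
    rw [hinner_dot ψd ψd] at h
    rw [hn2, hv, h]; norm_cast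
  have hcinner : (inner ℂ (ψ θ) ψd : ℂ) = c := by
    rw [hc, hu, hv, hinner_dot (ψ θ) ψd]
  have hcc : c + conj c = 0 := by
    have hone : (fun t => (inner ℂ (ψ t) (ψ t) : ℂ)) = fun _ => (1 : ℂ) := by
      funext t
      rw [inner_self_eq_norm_sq_to_K, hψunit t]; norm_num
    have hd := HasDerivAt.inner ℂ hψd hψd
    rw [hone] at hd
    have h0 : (inner ℂ (ψ θ) ψd : ℂ) + (inner ℂ ψd (ψ θ) : ℂ) = 0 :=
      hd.unique (hasDerivAt_const θ (1 : ℂ))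
    rw [← inner_conj_symm ψd (ψ θ), hcinner] at h0
    exact h0
  have habs : c * conj c = A2 := by
    rw [hA2, ← hcinner, Complex.mul_conj]
    norm_cast
    exact (Complex.sq_norm _).symm
  -- the matrix ρ at θ
  have hsu_eq : (fun j => conj (ψ θ j)) = star u := rfl
  have hρθ : ρ θ = Mc • W + Nc • σ θ := by
    rw [hρ θ]; rfl
  -- P kills u and v
  have hPu : P *ᵥ u = 0 := hPψ θ
  have hPv : P *ᵥ v = 0 := hPψd
  -- σ' is supported on P
  have hPσ'l : P * σ' = σ' := by
    ext i j
    have h1 : HasDerivAt (fun t => ∑ k, P i k * σ t k j) (∑ k, P i k * σ' k j) θ :=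
      HasDerivAt.fun_sum fun k _ => (hσ' k j).const_mul (P i k)
    have h2 : (fun t => ∑ k, P i k * σ t k j) = fun t => σ t i j := by
      funext t
      have := congrArg (fun A => A i j) (hPσ t).1
      simpa [Matrix.mul_apply] using this
    rw [h2] at h1
    have h3 := h1.unique (hσ' i j)
    simpa [Matrix.mul_apply] using h3
  have hσ'P : σ' * P = σ' := by
    ext i j
    have h1 : HasDerivAt (fun t => ∑ k, σ t i k * P k j) (∑ k, σ' i k * P k j) θ :=
      HasDerivAt.fun_sum fun k _ => (hσ' i k).mul_const (P k j)
    have h2 : (fun t => ∑ k, σ t i k * P k j) = fun t => σ t i j := by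
      funext t
      have := congrArg (fun A => A i j) (hPσ t).2
      simpa [Matrix.mul_apply] using this
    rw [h2] at h1
    have h3 := h1.unique (hσ' i j)
    simpa [Matrix.mul_apply] using h3
  -- σ and σ' kill u and v
  have hσu : σ θ *ᵥ u = 0 := by
    rw [← (hPσ θ).2, ← Matrix.mulVec_mulVec, hPu, Matrix.mulVec_zero]
  have hσv : σ θ *ᵥ v = 0 := by
    rw [← (hPσ θ).2, ← Matrix.mulVec_mulVec, hPv, Matrix.mulVec_zero]
  have hσ'u : σ' *ᵥ u = 0 := by
    rw [← hσ'P, ← Matrix.mulVec_mulVec, hPu, Matrix.mulVec_zero]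
  have hσ'v : σ' *ᵥ v = 0 := by
    rw [← hσ'P, ← Matrix.mulVec_mulVec, hPv, Matrix.mulVec_zero]
  -- trace of σ' vanishes
  have htrσ' : σ'.trace = 0 := by
    have h1 : HasDerivAt (fun t => (σ t).trace) (σ'.trace) θ := by
      simp only [Matrix.trace, Matrix.diag]
      exact HasDerivAt.fun_sum fun i _ => hσ' i i
    have h2 : (fun t => (σ t).trace) = fun _ => (1 : ℂ) := funext fun t => hσtr t
    rw [h2] at h1
    exact h1.unique (hasDerivAt_const θ (1 : ℂ))
  -- formula for ρ'
  have hρ'eq : ρ' = (-N'c) • W + Mc • (Wvu + Wuv) + N'c • σ θ + Nc • σ' := by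
    ext i j
    have hfun : (fun t => ρ t i j)
        = fun t => ((1 - N t : ℝ) : ℂ) * (ψ t i * conj (ψ t j)) + ((N t : ℝ) : ℂ) * σ t i j := by
      funext t
      rw [hρ t]
      simp [Matrix.vecMulVec_apply, mul_assoc]
    have h2 := (h1NcD.fun_mul ((hcomp i).fun_mul (hconj j))).fun_add (hNcD.fun_mul (hσ' i j))
    have h4 := hρ' i j
    rw [hfun] at h4
    have h5 := h4.unique h2
    rw [h5, hW, hWvu, hWuv]
    simp only [Matrix.add_apply, Matrix.smul_apply, Matrix.vecMulVec_apply, Pi.star_apply,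
      smul_eq_mul, RCLike.star_def, hu, hv]
    ring
  -- ρ θ is Hermitian
  have hWH : Wᴴ = W := by
    rw [hW, vecMulVec_conjT]
    simp
  have hρH : (ρ θ).IsHermitian := by
    show (ρ θ)ᴴ = ρ θ
    rw [hρθ, Matrix.conjTranspose_add, Matrix.conjTranspose_smul, Matrix.conjTranspose_smul,
      hWH, (hσpsd θ).1.eq, hMc_def, hNc_def]
    simp [RCLike.star_def, Complex.conj_ofReal]
  -- conjugation facts for scalars
  have hMcconj : conj Mc = Mc := by rw [hMc_def]; exact Complex.conj_ofReal _
  have hNcconj : conj Nc = Nc := by rw [hNc_def]; exact Complex.conj_ofReal _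
  have hN'cconj : conj N'c = N'c := by rw [hN'c_def]; exact Complex.conj_ofReal _
  have hn2conj : conj n2 = n2 := by rw [hn2, map_pow, Complex.conj_ofReal]
  -- mulVec computations
  have hvu : star v ⬝ᵥ u = conj c := by rw [star_dot_comm, ← hc]
  have hWu : W *ᵥ u = u := by rw [hW, vecMulVec_mulVec', huu, one_smul]
  have hWv : W *ᵥ v = c • u := by rw [hW, vecMulVec_mulVec', ← hc]
  have hWvuU : Wvu *ᵥ u = v := by rw [hWvu, vecMulVec_mulVec', huu, one_smul]
  have hWuvU : Wuv *ᵥ u = conj c • u := by rw [hWuv, vecMulVec_mulVec', hvu]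
  have hρu : ρ θ *ᵥ u = Mc • u := by
    rw [hρθ, Matrix.add_mulVec, Matrix.smul_mulVec, Matrix.smul_mulVec,
      hWu, hσu, smul_zero, add_zero]
  have hρv : ρ θ *ᵥ v = (Mc * c) • u := by
    rw [hρθ, Matrix.add_mulVec, Matrix.smul_mulVec, Matrix.smul_mulVec,
      hWv, hσv, smul_zero, add_zero, smul_smul]
  have hρ'u : ρ' *ᵥ u = (-N'c + Mc * conj c) • u + Mc • v := by
    rw [hρ'eq]
    simp only [Matrix.add_mulVec, Matrix.smul_mulVec, hWu, hWvuU, hWuvU, hσu, hσ'u,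
      smul_zero, add_zero]
    ext i
    simp only [Pi.add_apply, Pi.smul_apply, smul_eq_mul]
    ring
  -- sandwich identities
  have t1 : star u ⬝ᵥ ((L * ρ θ) *ᵥ u) = Mc * a := by
    rw [← Matrix.mulVec_mulVec, hρu, Matrix.mulVec_smul, dotProduct_smul, smul_eq_mul,
      ← ha]
  have t2 : star u ⬝ᵥ ((ρ θ * L) *ᵥ u) = Mc * a := by
    rw [← Matrix.mulVec_mulVec, herm_dot hρH, hρu, star_smul, smul_dotProduct, ← ha,
      smul_eq_mul, RCLike.star_def, hMcconj]
  have e1R : star u ⬝ᵥ (((2 : ℂ) • ρ') *ᵥ u) = 2 * (-N'c + Mc * conj c + Mc * c) := by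
    rw [Matrix.smul_mulVec, dotProduct_smul, hρ'u, dotProduct_add,
      dotProduct_smul, dotProduct_smul, huu, ← hc]
    simp only [smul_eq_mul]
    ring
  have E1 : Mc * a = -N'c := by
    have h := congrArg (fun A => star u ⬝ᵥ (A *ᵥ u)) hLyap
    rw [Matrix.add_mulVec, dotProduct_add, t1, t2, e1R] at h
    linear_combination h / 2 + Mc * hcc
  have t3 : star v ⬝ᵥ ((L * ρ θ) *ᵥ u) = Mc * conj b := by
    rw [← Matrix.mulVec_mulVec, hρu, Matrix.mulVec_smul, dotProduct_smul, smul_eq_mul,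
      herm_sandwich_conj hL, ← hb]
  have t4 : star v ⬝ᵥ ((ρ θ * L) *ᵥ u) = Mc * conj c * a := by
    rw [← Matrix.mulVec_mulVec, herm_dot hρH, hρv, star_smul, smul_dotProduct, ← ha,
      smul_eq_mul, RCLike.star_def, _root_.map_mul, hMcconj]
  have e2R : star v ⬝ᵥ (((2 : ℂ) • ρ') *ᵥ u)
      = 2 * ((-N'c + Mc * conj c) * conj c + Mc * n2) := by
    rw [Matrix.smul_mulVec, dotProduct_smul, hρ'u, dotProduct_add,
      dotProduct_smul, dotProduct_smul, hvu, hvv]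
    simp only [smul_eq_mul]
  have E2 : Mc * conj b + Mc * conj c * a = 2 * ((-N'c + Mc * conj c) * conj c + Mc * n2) := by
    have h := congrArg (fun A => star v ⬝ᵥ (A *ᵥ u)) hLyap
    rw [Matrix.add_mulVec, dotProduct_add, t3, t4, e2R] at h
    exact h
  -- traces of the rank-one pieces
  have htrW : W.trace = 1 := by
    have h := trace_vecMulVec_mul u (star u) (1 : Matrix (Fin d) (Fin d) ℂ)
    rw [mul_one, Matrix.one_mulVec, huu] at h
    rw [hW, h]
  have htrWvu : Wvu.trace = c := by
    have h := trace_vecMulVec_mul v (star u) (1 : Matrix (Fin d) (Fin d) ℂ)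
    rw [mul_one, Matrix.one_mulVec, ← hc] at h
    rw [hWvu, h]
  have htrWuv : Wuv.trace = conj c := by
    have h := trace_vecMulVec_mul u (star v) (1 : Matrix (Fin d) (Fin d) ℂ)
    rw [mul_one, Matrix.one_mulVec, hvu] at h
    rw [hWuv, h]
  have htrρ' : ρ'.trace = 0 := by
    rw [hρ'eq]
    simp only [Matrix.trace_add, Matrix.trace_smul, htrW, htrWvu, htrWuv, htrσ', hσtr θ,
      smul_eq_mul]
    linear_combination Mc * hcc
  have E3 : Mc * a + Nc * tσL = 0 := by
    have h := congrArg Matrix.trace hLyap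
    rw [Matrix.trace_add, Matrix.trace_smul, htrρ', Matrix.trace_mul_comm] at h
    have h2 : (ρ θ * L).trace = 0 := by
      simp only [smul_zero] at h
      linear_combination h / 2
    rw [hρθ, Matrix.add_mul, Matrix.smul_mul, Matrix.smul_mul, Matrix.trace_add,
      Matrix.trace_smul, Matrix.trace_smul] at h2
    have hWL : (W * L).trace = a := by rw [hW, trace_vecMulVec_mul, ← ha]
    rw [hWL, ← htσL] at h2
    simpa [smul_eq_mul] using h2
  have E4 : (σ θ * Lσ).trace = 0 := by
    have h := congrArg Matrix.trace hLyapσ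
    rw [Matrix.trace_add, Matrix.trace_smul, htrσ', Matrix.trace_mul_comm] at h
    simp only [smul_zero] at h
    linear_combination h / 2
  -- the P-sandwiched Lyapunov equation
  set M : Matrix (Fin d) (Fin d) ℂ := P * L * P with hM
  have hstarP : star u ᵥ* P = 0 := by
    have h := Matrix.star_mulVec P u
    rw [hPu, star_zero, hPH.eq] at h
    exact h.symm
  have hPρ : P * ρ θ = Nc • σ θ := by
    rw [hρθ, Matrix.mul_add, Matrix.mul_smul, Matrix.mul_smul, hW, QFIAux.mul_vecMulVec, hPu,
      vecMulVec_zero_left, smul_zero, zero_add, (hPσ θ).1]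
  have hρP : ρ θ * P = Nc • σ θ := by
    rw [hρθ, Matrix.add_mul, Matrix.smul_mul, Matrix.smul_mul, hW, vecMulVec_mul', hstarP,
      vecMulVec_zero_right, smul_zero, zero_add, (hPσ θ).2]
  have hMσ : M * σ θ = P * (L * σ θ) := by
    rw [hM]
    conv_rhs => rw [← (hPσ θ).1]
    simp only [Matrix.mul_assoc]
  have hσM : σ θ * M = σ θ * (L * P) := by
    rw [hM]
    conv_rhs => rw [← (hPσ θ).2]
    simp only [Matrix.mul_assoc]
  have hPρ'P : P * ρ' * P = N'c • σ θ + Nc • σ' := by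
    rw [hρ'eq, hW, hWvu, hWuv]
    simp only [Matrix.mul_add, Matrix.add_mul, Matrix.mul_smul, Matrix.smul_mul,
      QFIAux.mul_vecMulVec, hPu, hPv, vecMulVec_zero_left, Matrix.zero_mul, smul_zero, add_zero,
      zero_add]
    rw [Matrix.mul_assoc P (σ θ) P, (hPσ θ).2, (hPσ θ).1, Matrix.mul_assoc P σ' P, hσ'P, hPσ'l]
  have hMeq : Nc • (M * σ θ + σ θ * M) = (2 : ℂ) • (N'c • σ θ + Nc • σ') := by
    have h := congrArg (fun A => P * A * P) hLyap
    rw [Matrix.mul_add, Matrix.add_mul] at h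
    have ht1 : P * (L * ρ θ) * P = Nc • (M * σ θ) := by
      conv_lhs => rw [Matrix.mul_assoc, Matrix.mul_assoc, hρP, Matrix.mul_smul,
        Matrix.mul_smul]
      rw [← hMσ]
    have ht2 : P * (ρ θ * L) * P = Nc • (σ θ * M) := by
      conv_lhs => rw [← Matrix.mul_assoc, hPρ, Matrix.smul_mul, Matrix.smul_mul,
        Matrix.mul_assoc]
      rw [← hσM]
    rw [ht1, ht2, Matrix.mul_smul, Matrix.smul_mul, hPρ'P, ← smul_add] at h
    exact h
  -- the trace of σ' against L equals the σ-QFI term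
  have h3 : (Lσ * σ').trace = s := by
    have h2 : (2 : ℂ) * (Lσ * σ').trace = 2 * s := by
      calc (2 : ℂ) * (Lσ * σ').trace = (Lσ * ((2 : ℂ) • σ')).trace := by
            rw [Matrix.mul_smul, Matrix.trace_smul, smul_eq_mul]
        _ = (Lσ * (Lσ * σ θ)).trace + (Lσ * (σ θ * Lσ)).trace := by
            rw [← hLyapσ, Matrix.mul_add, Matrix.trace_add]
        _ = (σ θ * Lσ * Lσ).trace + (σ θ * Lσ * Lσ).trace := by
            rw [← Matrix.mul_assoc, ← Matrix.mul_assoc, Matrix.trace_mul_cycle Lσ Lσ (σ θ),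
              Matrix.trace_mul_cycle Lσ (σ θ) Lσ, Matrix.trace_mul_cycle Lσ Lσ (σ θ)]
        _ = 2 * s := by rw [← hs]; ring
    exact mul_left_cancel₀ two_ne_zero h2
  have hLX : (Lσ * (Nc • (M * σ θ + σ θ * M))).trace = Nc * (2 * (σ' * M).trace) := by
    rw [Matrix.mul_smul, Matrix.trace_smul, smul_eq_mul, Matrix.mul_add, Matrix.trace_add]
    have c1 : (Lσ * (M * σ θ)).trace = (M * (σ θ * Lσ)).trace := by
      rw [Matrix.trace_mul_comm, Matrix.mul_assoc]
    have c2 : (Lσ * (σ θ * M)).trace = (M * (Lσ * σ θ)).trace := by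
      rw [← Matrix.mul_assoc, Matrix.trace_mul_comm]
    rw [c1, c2, ← Matrix.trace_add, ← Matrix.mul_add, add_comm (σ θ * Lσ) (Lσ * σ θ), hLyapσ,
      Matrix.mul_smul, Matrix.trace_smul, smul_eq_mul, Matrix.trace_mul_comm M σ']
  have hRX : (Lσ * ((2 : ℂ) • (N'c • σ θ + Nc • σ'))).trace = Nc * (2 * s) := by
    simp only [Matrix.mul_smul, Matrix.mul_add, Matrix.trace_smul, Matrix.trace_add,
      smul_eq_mul]
    rw [Matrix.trace_mul_comm Lσ (σ θ), E4, h3]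
    ring
  have hσ'M : (σ' * M).trace = s := by
    have key : Nc * (2 * (σ' * M).trace) = Nc * (2 * s) := by rw [← hLX, hMeq, hRX]
    have key2 := mul_left_cancel₀ zN key
    exact mul_left_cancel₀ two_ne_zero key2
  have E5 : (σ' * L).trace = s := by
    have hσ'PP : P * σ' * P = σ' := by rw [hPσ'l, hσ'P]
    calc (σ' * L).trace = ((P * σ' * P) * L).trace := by rw [hσ'PP]
      _ = ((P * σ') * (P * L)).trace := by simp only [Matrix.mul_assoc]
      _ = ((P * L) * (P * σ')).trace := Matrix.trace_mul_comm _ _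
      _ = (M * σ').trace := by rw [hM]; simp only [Matrix.mul_assoc]
      _ = (σ' * M).trace := Matrix.trace_mul_comm _ _
      _ = s := hσ'M
  -- reduce the goal to the derivative trace
  have hTr : (ρ θ * L * L).trace = (ρ' * L).trace := by
    have h := congrArg Matrix.trace (congrArg (fun A => A * L) hLyap)
    rw [Matrix.add_mul, Matrix.trace_add] at h
    have hcyc : (L * ρ θ * L).trace = (ρ θ * L * L).trace := by
      rw [Matrix.mul_assoc, Matrix.trace_mul_comm]
    rw [hcyc, Matrix.smul_mul, Matrix.trace_smul, smul_eq_mul] at h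
    linear_combination h / 2
  have hexp : (ρ' * L).trace = -N'c * a + Mc * (b + conj b) + N'c * tσL + Nc * s := by
    rw [hρ'eq, hW, hWvu, hWuv]
    simp only [Matrix.add_mul, Matrix.smul_mul, Matrix.trace_add, Matrix.trace_smul,
      smul_eq_mul]
    rw [trace_vecMulVec_mul, trace_vecMulVec_mul, trace_vecMulVec_mul, ← ha, ← hb]
    have hconjb : star v ⬝ᵥ L *ᵥ u = conj b := by rw [herm_sandwich_conj hL, ← hb]
    rw [hconjb, E5, ← htσL]
  -- final algebra
  have hconjc : conj c = -c := by linear_combination hcc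
  have hc2 : c * c = -A2 := by linear_combination -habs + c * hcc
  have hMb' : Mc * conj b = -N'c * conj c + 2 * Mc * (conj c * conj c + n2) := by
    linear_combination E2 - conj c * E1
  have hMb : Mc * b = -N'c * c + 2 * Mc * (c * c + n2) := by
    have h := congrArg (starRingEnd ℂ) hMb'
    simp only [map_add, _root_.map_mul, map_neg, map_ofNat, Complex.conj_conj, hMcconj,
      hN'cconj, hn2conj] at h
    exact h
  have hbsum : Mc * (b + conj b) = 4 * Mc * (n2 - A2) := by
    rw [hconjc] at hMb'
    linear_combination hMb + hMb' + 4 * Mc * hc2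
  have hNt : Nc * tσL = N'c := by linear_combination E3 - E1
  have hcast1 : ((N' ^ 2 / (N θ * (1 - N θ)) : ℝ) : ℂ) = N'c ^ 2 / (Nc * Mc) := by
    rw [hN'c_def, hNc_def, hMc_def]
    push_cast
    ring
  have hcast2 : ((4 * (‖ψd‖ ^ 2 - ‖(inner ℂ (ψ θ) ψd : ℂ)‖ ^ 2) : ℝ) : ℂ)
      = 4 * (n2 - A2) := by
    rw [hn2, hA2]
    push_cast
    ring
  rw [hTr, hexp, hcast1, hcast2]
  have haval : a = -(N'c / Mc) := by
    have h2 : a = -N'c / Mc := eq_div_of_mul_eq zM (by linear_combination E1)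
    rw [h2, neg_div]
  have htval : tσL = N'c / Nc := eq_div_of_mul_eq zN (by linear_combination hNt)
  rw [hbsum, haval, htval]
  field_simp
  linear_combination (N'c ^ 2) * hMN
end

section
/- Let e_1, …, e_k be the standard orthonormal basis of ℂ^k, let p_x : ℝ → (0,1) be differentiable with Σ_{x=1}^k p_x(θ) = 1, and let ζ_x : ℝ → ℂ^d be differentiable families of unit vectors. Define the classical–quantum state ρ(θ) := Σ_{x=1}^k p_x(θ) ζ_x(θ)ζ_x(θ)* ⊗ e_x e_x* on ℂ^d ⊗ ℂ^k. If L is a Hermitian matrix with Lρ(θ) + ρ(θ)L = 2∂_θρ(θ), then Tr(ρ(θ)L²) = Σ_x (∂_θp_x)²/p_x + Σ_x p_x · 4(‖∂_θζ_x‖² − |⟨ζ_x, ∂_θζ_x⟩|²). -/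
open ComplexConjugate
open scoped Kronecker

private lemma sum_conj_mul_self' {d : ℕ} (v : EuclideanSpace ℂ (Fin d)) :
    ∑ n, conj (v n) * v n = ((‖v‖ : ℝ) : ℂ)^2 := by
  have h : (inner ℂ v v : ℂ) = ((‖v‖ : ℝ) : ℂ)^2 := by
    rw [inner_self_eq_norm_sq_to_K]; norm_cast
  rw [← h, PiLp.inner_apply]
  exact Finset.sum_congr rfl fun i _ => by rw [RCLike.inner_apply]; ring

private lemma conj_inner_deriv' {d : ℕ} (θ : ℝ) (ζ : ℝ → EuclideanSpace ℂ (Fin d))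
    (ζ' : EuclideanSpace ℂ (Fin d))
    (hunit : ∀ t, ‖ζ t‖ = 1) (hd : HasDerivAt ζ ζ' θ) :
    conj (inner ℂ (ζ θ) ζ' : ℂ) = - (inner ℂ (ζ θ) ζ' : ℂ) := by
  have h1 : HasDerivAt (fun t => (inner ℂ (ζ t) (ζ t) : ℂ))
      ((inner ℂ (ζ θ) ζ' : ℂ) + (inner ℂ ζ' (ζ θ) : ℂ)) θ := hd.inner ℂ hd
  have h2 : (fun t => (inner ℂ (ζ t) (ζ t) : ℂ)) = fun _ => (1 : ℂ) := by
    funext t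
    rw [inner_self_eq_norm_sq_to_K, hunit t]
    norm_num
  rw [h2] at h1
  have h3 : ((inner ℂ (ζ θ) ζ' : ℂ) + (inner ℂ ζ' (ζ θ) : ℂ)) = 0 :=
    h1.unique (hasDerivAt_const θ (1:ℂ))
  have h4 : (inner ℂ ζ' (ζ θ) : ℂ) = conj (inner ℂ (ζ θ) ζ' : ℂ) := (inner_conj_symm _ _).symm
  rw [h4] at h3
  linear_combination h3


/-- QFI of a classical–quantum (flagged) ensemble
`ρ(θ) = Σₓ pₓ(θ) ζₓζₓ* ⊗ eₓeₓ*` equals the classical Fisher information of the weights plus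
the average of the conditional pure-state QFIs. -/
theorem cq_state_QFI
    {d k : ℕ}
    (p : Fin k → ℝ → ℝ) (p' : Fin k → ℝ)
    (θ : ℝ)
    (hp01 : ∀ x t, p x t ∈ Set.Ioo (0 : ℝ) 1)
    (hpsum : ∀ t, ∑ x, p x t = 1)
    (hpdiff : ∀ x t, DifferentiableAt ℝ (p x) t)
    (hp' : ∀ x, HasDerivAt (p x) (p' x) θ)
    (ζ : Fin k → ℝ → EuclideanSpace ℂ (Fin d)) (ζ' : Fin k → EuclideanSpace ℂ (Fin d))
    (hζunit : ∀ x t, ‖ζ x t‖ = 1)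
    (hζdiff : ∀ x t, DifferentiableAt ℝ (ζ x) t)
    (hζ' : ∀ x, HasDerivAt (ζ x) (ζ' x) θ)
    (ρ : ℝ → Matrix (Fin d × Fin k) (Fin d × Fin k) ℂ)
    (hρ : ∀ t, ρ t = ∑ x, ((p x t : ℝ) : ℂ) •
      (Matrix.vecMulVec (fun i => ζ x t i) (fun j => conj (ζ x t j)) ⊗ₖ
        Matrix.single x x (1 : ℂ)))
    (ρ' : Matrix (Fin d × Fin k) (Fin d × Fin k) ℂ)
    (hρ' : ∀ a b, HasDerivAt (fun t => ρ t a b) (ρ' a b) θ)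
    (L : Matrix (Fin d × Fin k) (Fin d × Fin k) ℂ)
    (hL : L.IsHermitian)
    (hLyap : L * ρ θ + ρ θ * L = (2 : ℂ) • ρ') :
    (ρ θ * L * L).trace =
      ((∑ x, p' x ^ 2 / p x θ : ℝ) : ℂ)
        + ((∑ x, p x θ *
            (4 * (‖ζ' x‖ ^ 2 - ‖(inner ℂ (ζ x θ) (ζ' x) : ℂ)‖ ^ 2)) : ℝ) : ℂ) := by
  classical
  set m : Fin k → Fin k → Fin d → ℂ := fun x y i => ∑ n, L (i,x) (n,y) * ζ y θ n with hm
  set g : Fin k → ℂ := fun x => ∑ n, conj (ζ x θ n) * ζ' x n with hgdef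
  set s : Fin k → Fin k → ℂ := fun x y => ∑ i, conj (ζ x θ i) * m x y i with hsdef
  have hm' : ∀ x y i, (∑ n, L (i,x) (n,y) * ζ y θ n) = m x y i := fun _ _ _ => rfl
  have hs' : ∀ x y, (∑ i, conj (ζ x θ i) * m x y i) = s x y := fun _ _ => rfl
  have hg' : ∀ x, (∑ n, conj (ζ x θ n) * ζ' x n) = g x := fun _ => rfl
  have hP0 : ∀ x, ((p x θ : ℝ) : ℂ) ≠ 0 :=
    fun x => Complex.ofReal_ne_zero.mpr (ne_of_gt (hp01 x θ).1)
  have hLc : ∀ a b, conj (L a b) = L b a := fun a b => hL.apply b a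
  have hnorm : ∀ x, ∑ n, conj (ζ x θ n) * ζ x θ n = 1 := fun x => by
    rw [sum_conj_mul_self' (ζ x θ), hζunit x θ]; norm_num
  have hginner : ∀ x, g x = (inner ℂ (ζ x θ) (ζ' x) : ℂ) := fun x => by
    rw [hgdef, PiLp.inner_apply]; simp [RCLike.inner_apply, mul_comm]
  have hgconj : ∀ x, conj (g x) = - g x := fun x => by
    rw [hginner]
    exact conj_inner_deriv' θ (ζ x) (ζ' x) (fun t => hζunit x t) (hζ' x)
  -- entries of ρ t
  have hρent : ∀ t i x j y, ρ t (i,x) (j,y)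
      = if x = y then ((p x t : ℝ) : ℂ) * (ζ x t i * conj (ζ x t j)) else 0 := by
    intro t i x j y
    rw [hρ t]
    simp only [Matrix.sum_apply, Matrix.smul_apply, Matrix.kroneckerMap_apply,
      Matrix.vecMulVec_apply, Matrix.single_apply, Matrix.of_apply, smul_eq_mul]
    by_cases h : x = y
    · subst h
      simp [Finset.sum_ite_eq, mul_comm, mul_assoc]
    · simp [h]
      refine Finset.sum_eq_zero fun z _ => ?_
      rw [if_neg]
      rintro ⟨rfl, rfl⟩; exact h rfl
  -- entries of ρ'
  have hρ'ent : ∀ i x j y, ρ' (i,x) (j,y)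
      = if x = y then ((p' x : ℝ) : ℂ) * (ζ x θ i * conj (ζ x θ j))
          + ((p x θ : ℝ) : ℂ) * (ζ' x i * conj (ζ x θ j) + ζ x θ i * conj (ζ' x j)) else 0 := by
    intro i x j y
    by_cases hxy : x = y
    · subst hxy
      rw [if_pos rfl]
      have hfun : (fun t => ρ t (i,x) (j,x))
          = (fun t => ((p x t : ℝ) : ℂ) * (ζ x t i * conj (ζ x t j))) :=
        funext fun t => by rw [hρent t i x j x, if_pos rfl]
      have hP : HasDerivAt (fun t => ((p x t : ℝ) : ℂ)) ((p' x : ℝ) : ℂ) θ :=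
        (hp' x).ofReal_comp
      have hzi : HasDerivAt (fun t => ζ x t i) (ζ' x i) θ := by
        have := (((EuclideanSpace.proj (𝕜 := ℂ) i).restrictScalars ℝ).hasFDerivAt
          (x := ζ x θ)).comp_hasDerivAt θ (hζ' x)
        exact this
      have hzj : HasDerivAt (fun t => ζ x t j) (ζ' x j) θ := by
        have := (((EuclideanSpace.proj (𝕜 := ℂ) j).restrictScalars ℝ).hasFDerivAt
          (x := ζ x θ)).comp_hasDerivAt θ (hζ' x)
        exact this
      have hconj : HasDerivAt (fun t => conj (ζ x t j)) (conj (ζ' x j)) θ := by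
        have := (Complex.conjCLE.toContinuousLinearMap.hasFDerivAt
          (x := ζ x θ j)).comp_hasDerivAt θ hzj
        exact this
      have hD : HasDerivAt (fun t => ((p x t : ℝ) : ℂ) * (ζ x t i * conj (ζ x t j)))
          (((p' x : ℝ) : ℂ) * (ζ x θ i * conj (ζ x θ j))
            + ((p x θ : ℝ) : ℂ) * (ζ' x i * conj (ζ x θ j) + ζ x θ i * conj (ζ' x j))) θ := by
        exact hP.mul (hzi.mul hconj)
      have hD' : HasDerivAt (fun t => ρ t (i,x) (j,x))
          (((p' x : ℝ) : ℂ) * (ζ x θ i * conj (ζ x θ j))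
            + ((p x θ : ℝ) : ℂ) * (ζ' x i * conj (ζ x θ j) + ζ x θ i * conj (ζ' x j))) θ := by
        rw [hfun]; exact hD
      exact (hρ' (i,x) (j,x)).unique hD'
    · rw [if_neg hxy]
      have hfun : (fun t => ρ t (i,x) (j,y)) = fun _ => (0:ℂ) :=
        funext fun t => by rw [hρent t i x j y, if_neg hxy]
      refine (hρ' (i,x) (j,y)).unique ?_
      rw [hfun]; exact hasDerivAt_const θ 0
  -- entrywise Lyapunov equation
  have heq : ∀ i x j y, ((p y θ:ℝ):ℂ) * (m x y i * conj (ζ y θ j))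
      + ((p x θ:ℝ):ℂ) * (ζ x θ i * conj (m y x j)) = 2 * ρ' (i,x) (j,y) := by
    intro i x j y
    have h := congrFun (congrFun hLyap (i,x)) (j,y)
    simp only [Matrix.add_apply, Matrix.mul_apply, Matrix.smul_apply, smul_eq_mul,
      Fintype.sum_prod_type] at h
    rw [show (∑ n, ∑ z, L (i,x) (n,z) * ρ θ (n,z) (j,y))
        = ((p y θ:ℝ):ℂ) * ((∑ n, L (i,x) (n,y) * ζ y θ n) * conj (ζ y θ j)) by
      rw [Finset.sum_comm]
      rw [Finset.sum_eq_single y]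
      · rw [Finset.sum_mul, Finset.mul_sum]
        refine Finset.sum_congr rfl fun n _ => ?_
        rw [hρent θ n y j y, if_pos rfl]; ring
      · intro z _ hz
        refine Finset.sum_eq_zero fun n _ => ?_
        rw [hρent θ n z j y, if_neg hz, mul_zero]
      · intro h'; exact absurd (Finset.mem_univ y) h'] at h
    rw [show (∑ n, ∑ z, ρ θ (i,x) (n,z) * L (n,z) (j,y))
        = ((p x θ:ℝ):ℂ) * (ζ x θ i * conj (∑ n, L (j,y) (n,x) * ζ x θ n)) by
      rw [Finset.sum_comm]
      rw [Finset.sum_eq_single x]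
      · rw [map_sum, Finset.mul_sum, Finset.mul_sum]
        refine Finset.sum_congr rfl fun n _ => ?_
        rw [hρent θ i x n x, if_pos rfl, map_mul, hLc]; ring
      · intro z _ hz
        refine Finset.sum_eq_zero fun n _ => ?_
        rw [hρent θ i x n z, if_neg (fun hh => hz hh.symm), zero_mul]
      · intro h'; exact absurd (Finset.mem_univ x) h'] at h
    rw [hm', hm'] at h
    exact h
  -- hermiticity of s
  have hs_symm : ∀ x y, conj (s y x) = s x y := by
    intro x y
    simp only [hsdef, hm, map_sum, map_mul, Complex.conj_conj, hLc, Finset.mul_sum]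
    rw [Finset.sum_comm]
    exact Finset.sum_congr rfl fun n _ => Finset.sum_congr rfl fun j _ => by ring
  -- contraction of the Lyapunov equation against ζ y in the second index
  have hv : ∀ x y i,
      ((p y θ:ℝ):ℂ) * m x y i + ((p x θ:ℝ):ℂ) * ζ x θ i * conj (s y x)
        = ∑ j, (2 * ρ' (i,x) (j,y)) * ζ y θ j := by
    intro x y i
    have t1 : ∑ j, ((p y θ:ℝ):ℂ) * (m x y i * conj (ζ y θ j)) * ζ y θ j
        = ((p y θ:ℝ):ℂ) * m x y i := by
      calc ∑ j, ((p y θ:ℝ):ℂ) * (m x y i * conj (ζ y θ j)) * ζ y θ j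
          = ((p y θ:ℝ):ℂ) * m x y i * ∑ j, conj (ζ y θ j) * ζ y θ j := by
            rw [Finset.mul_sum]; exact Finset.sum_congr rfl fun j _ => by ring
        _ = ((p y θ:ℝ):ℂ) * m x y i := by rw [hnorm y]; ring
    have t2 : ∑ j, ((p x θ:ℝ):ℂ) * (ζ x θ i * conj (m y x j)) * ζ y θ j
        = ((p x θ:ℝ):ℂ) * ζ x θ i * conj (s y x) := by
      simp only [hsdef, map_sum, map_mul, Complex.conj_conj]
      rw [Finset.mul_sum]
      exact Finset.sum_congr rfl fun j _ => by ring
    calc ((p y θ:ℝ):ℂ) * m x y i + ((p x θ:ℝ):ℂ) * ζ x θ i * conj (s y x)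
        = ∑ j, (((p y θ:ℝ):ℂ) * (m x y i * conj (ζ y θ j))
            + ((p x θ:ℝ):ℂ) * (ζ x θ i * conj (m y x j))) * ζ y θ j := by
          simp only [add_mul, Finset.sum_add_distrib]
          rw [t1, t2]
      _ = ∑ j, (2 * ρ' (i,x) (j,y)) * ζ y θ j :=
          Finset.sum_congr rfl fun j _ => by rw [heq i x j y]
  -- off-diagonal vanishing
  have hvoff : ∀ x y, x ≠ y → ∀ i,
      ((p y θ:ℝ):ℂ) * m x y i + ((p x θ:ℝ):ℂ) * ζ x θ i * conj (s y x) = 0 := by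
    intro x y hxy i
    rw [hv x y i]
    refine Finset.sum_eq_zero fun j _ => ?_
    rw [hρ'ent i x j y, if_neg hxy]; ring
  have hsoff : ∀ x y, x ≠ y → s x y = 0 := by
    intro x y hxy
    have hc : ∑ i, conj (ζ x θ i)
        * (((p y θ:ℝ):ℂ) * m x y i + ((p x θ:ℝ):ℂ) * ζ x θ i * conj (s y x)) = 0 :=
      Finset.sum_eq_zero fun i _ => by rw [hvoff x y hxy i, mul_zero]
    have hexp : ∑ i, conj (ζ x θ i)
        * (((p y θ:ℝ):ℂ) * m x y i + ((p x θ:ℝ):ℂ) * ζ x θ i * conj (s y x))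
        = ((p y θ:ℝ):ℂ) * s x y + ((p x θ:ℝ):ℂ) * conj (s y x) := by
      simp only [mul_add, Finset.sum_add_distrib]
      congr 1
      · rw [← hs' x y, Finset.mul_sum]
        exact Finset.sum_congr rfl fun i _ => by ring
      · calc ∑ i, conj (ζ x θ i) * (((p x θ:ℝ):ℂ) * ζ x θ i * conj (s y x))
            = ((p x θ:ℝ):ℂ) * conj (s y x) * ∑ i, conj (ζ x θ i) * ζ x θ i := by
              rw [Finset.mul_sum]; exact Finset.sum_congr rfl fun i _ => by ring
          _ = _ := by rw [hnorm x]; ring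
    rw [hexp, hs_symm x y] at hc
    have hPP : (((p y θ:ℝ):ℂ) + ((p x θ:ℝ):ℂ)) ≠ 0 := by
      rw [← Complex.ofReal_add]
      exact Complex.ofReal_ne_zero.mpr
        (ne_of_gt (add_pos (hp01 y θ).1 (hp01 x θ).1))
    have h0 : (((p y θ:ℝ):ℂ) + ((p x θ:ℝ):ℂ)) * s x y = 0 := by linear_combination hc
    exact (mul_eq_zero.mp h0).resolve_left hPP
  have hmoff : ∀ x y, x ≠ y → ∀ i, m x y i = 0 := by
    intro x y hxy i
    have h0 := hvoff x y hxy i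
    rw [hs_symm x y, hsoff x y hxy, mul_zero, add_zero] at h0
    exact (mul_eq_zero.mp h0).resolve_left (hP0 y)
  -- diagonal analysis
  have hvd : ∀ x i,
      ((p x θ:ℝ):ℂ) * m x x i + ((p x θ:ℝ):ℂ) * ζ x θ i * conj (s x x)
        = 2 * (((p' x:ℝ):ℂ) * ζ x θ i + ((p x θ:ℝ):ℂ) * ζ' x i
            + ((p x θ:ℝ):ℂ) * conj (g x) * ζ x θ i) := by
    intro x i
    rw [hv x x i]
    have hterm : ∀ j, (2 * ρ' (i,x) (j,x)) * ζ x θ j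
        = (2*((p' x:ℝ):ℂ)*ζ x θ i) * (conj (ζ x θ j) * ζ x θ j)
          + (2*((p x θ:ℝ):ℂ)*ζ' x i) * (conj (ζ x θ j) * ζ x θ j)
          + (2*((p x θ:ℝ):ℂ)*ζ x θ i) * (conj (ζ' x j) * ζ x θ j) := fun j => by
      rw [hρ'ent i x j x, if_pos rfl]; ring
    have hB' : ∑ j, conj (ζ' x j) * ζ x θ j = conj (g x) := by
      rw [hgdef, map_sum]
      exact Finset.sum_congr rfl fun j _ => by rw [map_mul, Complex.conj_conj]; ring
    simp only [hterm, Finset.sum_add_distrib, ← Finset.mul_sum]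
    rw [hnorm x, hB']
    ring
  have hsreal : ∀ x, conj (s x x) = s x x := fun x => hs_symm x x
  have hPs : ∀ x, ((p x θ:ℝ):ℂ) * s x x = ((p' x:ℝ):ℂ) := by
    intro x
    have h1 : ∑ i, conj (ζ x θ i)
        * (((p x θ:ℝ):ℂ) * m x x i + ((p x θ:ℝ):ℂ) * ζ x θ i * conj (s x x))
        = ∑ i, conj (ζ x θ i) * (2 * (((p' x:ℝ):ℂ) * ζ x θ i + ((p x θ:ℝ):ℂ) * ζ' x i
            + ((p x θ:ℝ):ℂ) * conj (g x) * ζ x θ i)) :=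
      Finset.sum_congr rfl fun i _ => by rw [hvd x i]
    have e1 : ∑ i, conj (ζ x θ i)
        * (((p x θ:ℝ):ℂ) * m x x i + ((p x θ:ℝ):ℂ) * ζ x θ i * conj (s x x))
        = ((p x θ:ℝ):ℂ) * s x x + ((p x θ:ℝ):ℂ) * conj (s x x) := by
      simp only [mul_add, Finset.sum_add_distrib]
      congr 1
      · rw [← hs' x x, Finset.mul_sum]
        exact Finset.sum_congr rfl fun i _ => by ring
      · calc ∑ i, conj (ζ x θ i) * (((p x θ:ℝ):ℂ) * ζ x θ i * conj (s x x))
            = ((p x θ:ℝ):ℂ) * conj (s x x) * ∑ i, conj (ζ x θ i) * ζ x θ i := by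
              rw [Finset.mul_sum]; exact Finset.sum_congr rfl fun i _ => by ring
          _ = _ := by rw [hnorm x]; ring
    have e2 : ∑ i, conj (ζ x θ i) * (2 * (((p' x:ℝ):ℂ) * ζ x θ i + ((p x θ:ℝ):ℂ) * ζ' x i
            + ((p x θ:ℝ):ℂ) * conj (g x) * ζ x θ i))
        = 2*((p' x:ℝ):ℂ) + 2*((p x θ:ℝ):ℂ)*(g x) + 2*((p x θ:ℝ):ℂ)*conj (g x) := by
      have hterm : ∀ i, conj (ζ x θ i) * (2 * (((p' x:ℝ):ℂ) * ζ x θ i + ((p x θ:ℝ):ℂ) * ζ' x i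
            + ((p x θ:ℝ):ℂ) * conj (g x) * ζ x θ i))
          = (2*((p' x:ℝ):ℂ)) * (conj (ζ x θ i) * ζ x θ i)
            + (2*((p x θ:ℝ):ℂ)) * (conj (ζ x θ i) * ζ' x i)
            + (2*((p x θ:ℝ):ℂ)*conj (g x)) * (conj (ζ x θ i) * ζ x θ i) := fun i => by ring
      simp only [hterm, Finset.sum_add_distrib, ← Finset.mul_sum]
      rw [hnorm x, hg' x]
      ring
    rw [e1, e2, hsreal x, hgconj x] at h1
    linear_combination h1 / 2
  have hmd : ∀ x i, m x x i
      = s x x * ζ x θ i + 2 * ζ' x i + 2 * conj (g x) * ζ x θ i := by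
    intro x i
    have h0 := hvd x i
    rw [hsreal x] at h0
    refine mul_left_cancel₀ (hP0 x) ?_
    linear_combination h0 - 2 * ζ x θ i * hPs x
  -- value of the diagonal block contribution
  have hmsum : ∀ x, ∑ n, conj (m x x n) * m x x n
      = s x x * s x x
        + 4 * (((‖ζ' x‖ : ℝ):ℂ)^2 - ((‖g x‖ : ℝ):ℂ)^2) := by
    intro x
    have hC := sum_conj_mul_self' (ζ' x)
    have habs : g x * conj (g x) = ((‖g x‖ : ℝ):ℂ)^2 := by
      rw [Complex.mul_conj, Complex.normSq_eq_norm_sq]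
      push_cast; ring
    have hgsq : g x * g x = -(((‖g x‖ : ℝ):ℂ)^2) := by
      have := habs
      rw [hgconj x] at this
      linear_combination -this
    have hB' : ∑ n, conj (ζ' x n) * ζ x θ n = conj (g x) := by
      rw [hgdef, map_sum]
      exact Finset.sum_congr rfl fun n _ => by rw [map_mul, Complex.conj_conj]; ring
    have expand : ∀ n, conj (m x x n) * m x x n =
        (s x x * s x x) * (conj (ζ x θ n) * ζ x θ n)
        + (2 * s x x) * (conj (ζ x θ n) * ζ' x n)
        + (2 * s x x * conj (g x)) * (conj (ζ x θ n) * ζ x θ n)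
        + (2 * s x x) * (conj (ζ' x n) * ζ x θ n)
        + 4 * (conj (ζ' x n) * ζ' x n)
        + (4 * conj (g x)) * (conj (ζ' x n) * ζ x θ n)
        + (2 * g x * s x x) * (conj (ζ x θ n) * ζ x θ n)
        + (4 * g x) * (conj (ζ x θ n) * ζ' x n)
        + (4 * g x * conj (g x)) * (conj (ζ x θ n) * ζ x θ n) := by
      intro n
      rw [hmd x n]
      simp only [map_add, map_mul, Complex.conj_conj, map_ofNat]
      rw [hsreal x]
      ring
    simp only [expand, Finset.sum_add_distrib, ← Finset.mul_sum]
    rw [hnorm x, hg' x, hC, hB', hgconj x]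
    linear_combination 4 * hgsq
  -- trace computation
  have hstep : ∀ i x n y, (ρ θ * L) (i,x) (n,y)
      = ((p x θ:ℝ):ℂ) * ζ x θ i * conj (m y x n) := by
    intro i x n y
    rw [Matrix.mul_apply, Fintype.sum_prod_type, Finset.sum_comm]
    rw [Finset.sum_eq_single x]
    · simp only [hm, map_sum, map_mul]
      rw [Finset.mul_sum]
      refine Finset.sum_congr rfl fun j _ => ?_
      rw [hρent θ i x j x, if_pos rfl, hLc (n,y) (j,x)]; ring
    · intro z _ hz
      refine Finset.sum_eq_zero fun j _ => ?_
      rw [hρent θ i x j z, if_neg (fun hh => hz hh.symm), zero_mul]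
    · intro h'; exact absurd (Finset.mem_univ x) h'
  have htr : (ρ θ * L * L).trace
      = ∑ x, ((p x θ:ℝ):ℂ) * ∑ y, ∑ n, conj (m y x n) * m y x n := by
    have h1 : (ρ θ * L * L).trace
        = ∑ b : Fin d × Fin k, ∑ x, ((p x θ:ℝ):ℂ) * (conj (m b.2 x b.1) * m b.2 x b.1) := by
      rw [Matrix.trace]
      simp only [Matrix.diag_apply, Matrix.mul_apply (M := ρ θ * L) (N := L)]
      rw [Finset.sum_comm]
      refine Finset.sum_congr rfl fun b _ => ?_
      obtain ⟨n, y⟩ := b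
      rw [Fintype.sum_prod_type, Finset.sum_comm]
      refine Finset.sum_congr rfl fun x _ => ?_
      calc ∑ i, (ρ θ * L) (i,x) (n,y) * L (n,y) (i,x)
          = ∑ i, ((p x θ:ℝ):ℂ) * conj (m y x n) * (L (n,y) (i,x) * ζ x θ i) := by
            refine Finset.sum_congr rfl fun i _ => ?_
            rw [hstep i x n y]; ring
        _ = ((p x θ:ℝ):ℂ) * conj (m y x n) * (∑ i, L (n,y) (i,x) * ζ x θ i) := by
            rw [Finset.mul_sum]
        _ = ((p x θ:ℝ):ℂ) * (conj (m y x n) * m y x n) := by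
            rw [hm']; ring
    calc (ρ θ * L * L).trace
        = ∑ b : Fin d × Fin k, ∑ x, ((p x θ:ℝ):ℂ) * (conj (m b.2 x b.1) * m b.2 x b.1) := h1
      _ = ∑ n, ∑ y, ∑ x, ((p x θ:ℝ):ℂ) * (conj (m y x n) * m y x n) := by
          rw [Fintype.sum_prod_type]
      _ = ∑ y, ∑ n, ∑ x, ((p x θ:ℝ):ℂ) * (conj (m y x n) * m y x n) := Finset.sum_comm
      _ = ∑ y, ∑ x, ∑ n, ((p x θ:ℝ):ℂ) * (conj (m y x n) * m y x n) :=
          Finset.sum_congr rfl fun y _ => Finset.sum_comm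
      _ = ∑ x, ∑ y, ∑ n, ((p x θ:ℝ):ℂ) * (conj (m y x n) * m y x n) := Finset.sum_comm
      _ = ∑ x, ((p x θ:ℝ):ℂ) * ∑ y, ∑ n, conj (m y x n) * m y x n := by
          simp only [← Finset.mul_sum]
  have hfin : ∀ x, ∑ y, ∑ n, conj (m y x n) * m y x n
      = ∑ n, conj (m x x n) * m x x n := by
    intro x
    refine Finset.sum_eq_single x ?_ ?_
    · intro y _ hyx
      exact Finset.sum_eq_zero fun n _ => by rw [hmoff y x hyx n, map_zero, zero_mul]
    · intro h'; exact absurd (Finset.mem_univ x) h'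
  have hsv : ∀ x, s x x = ((p' x / p x θ : ℝ):ℂ) := by
    intro x
    push_cast
    rw [eq_div_iff (hP0 x)]
    linear_combination hPs x
  rw [htr]
  calc ∑ x, ((p x θ:ℝ):ℂ) * ∑ y, ∑ n, conj (m y x n) * m y x n
      = ∑ x, (((p' x ^ 2 / p x θ : ℝ):ℂ)
          + ((p x θ * (4 * (‖ζ' x‖ ^ 2 - ‖(inner ℂ (ζ x θ) (ζ' x) : ℂ)‖ ^ 2)) : ℝ):ℂ)) := by
        refine Finset.sum_congr rfl fun x _ => ?_
        rw [hfin x, hmsum x, hsv x, hginner x]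
        have hne := hP0 x
        push_cast
        field_simp
    _ = ((∑ x, p' x ^ 2 / p x θ : ℝ) : ℂ)
        + ((∑ x, p x θ *
            (4 * (‖ζ' x‖ ^ 2 - ‖(inner ℂ (ζ x θ) (ζ' x) : ℂ)‖ ^ 2)) : ℝ) : ℂ) := by
        rw [Finset.sum_add_distrib]
        push_cast
        ring
end

section
/- Let H_S be a complex Hilbert space and (e_x)_{x∈ℕ} an orthonormal basis of a complex Hilbert space H_I. Let θ ↦ Φ(θ) = Σ_x ζ_x(θ) ⊗ e_x be a differentiable family of unit vectors in H_S ⊗ H_I, with each ζ_x differentiable and ∂_θΦ = Σ_x (∂_θζ_x) ⊗ e_x (norm-convergent), and ζ_x(θ) ≠ 0 for every x. Suppose the zero-diagonal condition holds at θ: ⟨ζ_x(θ), ∂_θζ_x(θ)⟩ = ⟨Φ(θ), ∂_θΦ(θ)⟩ ‖ζ_x(θ)‖² for every x. Then the pure-state QFI of Φ decomposes as the convex combination of conditional pure-state QFIs: 4(‖∂_θΦ‖² − |⟨Φ, ∂_θΦ⟩|²) = Σ_x (4‖∂_θζ_x‖² − 4|⟨ζ_x, ∂_θζ_x⟩|²/‖ζ_x‖²)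 = Σ_x ‖ζ_x‖² · 4( ‖∂_θζ_x‖²/‖ζ_x‖² − |⟨ζ_x, ∂_θζ_x⟩|²/‖ζ_x‖⁴ ). -/
open ComplexConjugate

lemma aux_inner_hasSum {H_S H_I E : Type*}
    [NormedAddCommGroup H_S] [InnerProductSpace ℂ H_S]
    [NormedAddCommGroup H_I] [InnerProductSpace ℂ H_I] [CompleteSpace H_I]
    [NormedAddCommGroup E] [InnerProductSpace ℂ E]
    (tens : H_S →ₗ[ℂ] H_I →ₗ[ℂ] E)
    (htens : ∀ (a : H_S) (b : H_I) (c : H_S) (d : H_I),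
      (inner ℂ (tens a b) (tens c d) : ℂ) = (inner ℂ a c : ℂ) * (inner ℂ b d : ℂ))
    (e : HilbertBasis ℕ ℂ H_I)
    (a b : ℕ → H_S) (S T : E)
    (hS : HasSum (fun x => tens (a x) (e x)) S)
    (hT : HasSum (fun x => tens (b x) (e x)) T) :
    HasSum (fun x => (inner ℂ (a x) (b x) : ℂ)) (inner ℂ S T : ℂ) := by
  have horth := orthonormal_iff_ite.mp e.orthonormal
  have h1 : ∀ x, (inner ℂ (tens (a x) (e x)) T : ℂ) = inner ℂ (a x) (b x) := by
    intro x
    have h := (innerSL ℂ (tens (a x) (e x))).hasSum hT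
    simp only [innerSL_apply_apply, htens] at h
    have heq : (fun y => (inner ℂ (a x) (b y) : ℂ) * inner ℂ (e x) (e y))
        = fun y => if y = x then (inner ℂ (a x) (b x) : ℂ) else 0 := by
      funext y
      rw [horth]
      by_cases hxy : x = y
      · subst hxy; simp
      · simp [hxy, Ne.symm hxy]
    rw [heq] at h
    exact h.unique (hasSum_ite_eq x _)
  have h3 : HasSum (fun x => (inner ℂ T (tens (a x) (e x)) : ℂ)) (inner ℂ T S) :=
    (innerSL ℂ T).hasSum hS
  have h5 := h3.star
  have heq2 : (fun x => star (inner ℂ T (tens (a x) (e x)) : ℂ))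
      = fun x => (inner ℂ (a x) (b x) : ℂ) := by
    funext x
    rw [← h1 x]
    exact inner_conj_symm _ _
  rw [heq2] at h5
  have : star (inner ℂ T S : ℂ) = inner ℂ S T := inner_conj_symm _ _
  rwa [this] at h5

/-- (Theorem 1 of the paper, pure-state form.)
If `Φ(θ) = Σₓ ζₓ(θ) ⊗ eₓ` with `(eₓ)` an orthonormal basis of the idler space and the
zero-diagonal condition `⟨ζₓ, ∂ζₓ⟩ = ⟨Φ, ∂Φ⟩‖ζₓ‖²` holds, then the pure-state QFI of `Φ`
decomposes as a convex combination of the conditional pure-state QFIs. -/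
theorem qfi_convex_decomposition_of_zero_diagonal
    {H_S H_I E : Type*}
    [NormedAddCommGroup H_S] [InnerProductSpace ℂ H_S]
    [NormedAddCommGroup H_I] [InnerProductSpace ℂ H_I] [CompleteSpace H_I]
    [NormedAddCommGroup E] [InnerProductSpace ℂ E]
    (tens : H_S →ₗ[ℂ] H_I →ₗ[ℂ] E)
    (htens : ∀ (a : H_S) (b : H_I) (c : H_S) (d : H_I),
      (inner ℂ (tens a b) (tens c d) : ℂ) = (inner ℂ a c : ℂ) * (inner ℂ b d : ℂ))
    (e : HilbertBasis ℕ ℂ H_I)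
    (ζ ζd : ℕ → ℝ → H_S)
    (hζ : ∀ x t, HasDerivAt (ζ x) (ζd x t) t)
    (θ : ℝ)
    (hζne : ∀ x, ζ x θ ≠ 0)
    (Φ Φd : ℝ → E)
    (hΦsum : ∀ t, HasSum (fun x => tens (ζ x t) (e x)) (Φ t))
    (hΦdsum : ∀ t, HasSum (fun x => tens (ζd x t) (e x)) (Φd t))
    (hΦderiv : ∀ t, HasDerivAt Φ (Φd t) t)
    (hunit : ∀ t, ‖Φ t‖ = 1)
    (hzero : ∀ x, (inner ℂ (ζ x θ) (ζd x θ) : ℂ) =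
      (inner ℂ (Φ θ) (Φd θ) : ℂ) * ((‖ζ x θ‖ : ℂ) ^ 2)) :
    4 * (‖Φd θ‖ ^ 2 - ‖(inner ℂ (Φ θ) (Φd θ) : ℂ)‖ ^ 2) =
        ∑' x, (4 * ‖ζd x θ‖ ^ 2
          - 4 * ‖(inner ℂ (ζ x θ) (ζd x θ) : ℂ)‖ ^ 2 / ‖ζ x θ‖ ^ 2) ∧
      4 * (‖Φd θ‖ ^ 2 - ‖(inner ℂ (Φ θ) (Φd θ) : ℂ)‖ ^ 2) =
        ∑' x, ‖ζ x θ‖ ^ 2 *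
          (4 * (‖ζd x θ‖ ^ 2 / ‖ζ x θ‖ ^ 2
            - ‖(inner ℂ (ζ x θ) (ζd x θ) : ℂ)‖ ^ 2 / ‖ζ x θ‖ ^ 4)) := by
  set c : ℂ := inner ℂ (Φ θ) (Φd θ) with hc
  have hnz : ∀ x, ‖ζ x θ‖ ≠ 0 := fun x => norm_ne_zero_iff.mpr (hζne x)
  have hΦΦ := aux_inner_hasSum tens htens e _ _ _ _ (hΦsum θ) (hΦsum θ)
  have hdd := aux_inner_hasSum tens htens e _ _ _ _ (hΦdsum θ) (hΦdsum θ)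
  have hnorms : HasSum (fun x => ‖ζ x θ‖ ^ 2) 1 := by
    have h := Complex.reCLM.hasSum hΦΦ
    simp only [inner_self_eq_norm_sq_to_K] at h
    simpa [← Complex.ofReal_pow, hunit θ] using h
  have hdnorms : HasSum (fun x => ‖ζd x θ‖ ^ 2) (‖Φd θ‖ ^ 2) := by
    have h := Complex.reCLM.hasSum hdd
    simp only [inner_self_eq_norm_sq_to_K] at h
    simpa [← Complex.ofReal_pow] using h
  have habs : ∀ x, ‖(inner ℂ (ζ x θ) (ζd x θ) : ℂ)‖ ^ 2
      = ‖c‖ ^ 2 * ‖ζ x θ‖ ^ 4 := by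
    intro x
    rw [hzero x]
    simp [map_mul, mul_pow, ← pow_mul]
  have hterm : ∀ x, 4 * ‖ζd x θ‖ ^ 2
      - 4 * ‖(inner ℂ (ζ x θ) (ζd x θ) : ℂ)‖ ^ 2 / ‖ζ x θ‖ ^ 2
      = 4 * ‖ζd x θ‖ ^ 2 - 4 * ‖c‖ ^ 2 * ‖ζ x θ‖ ^ 2 := by
    intro x
    have hpow : (‖ζ x θ‖ : ℝ) ^ 2 ≠ 0 := pow_ne_zero 2 (hnz x)
    congr 1
    rw [habs x, div_eq_iff hpow]
    ring
  have hF : HasSum (fun x => 4 * ‖ζd x θ‖ ^ 2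
      - 4 * ‖(inner ℂ (ζ x θ) (ζd x θ) : ℂ)‖ ^ 2 / ‖ζ x θ‖ ^ 2)
      (4 * ‖Φd θ‖ ^ 2 - 4 * ‖c‖ ^ 2) := by
    have h := (hdnorms.mul_left 4).sub (hnorms.mul_left (4 * ‖c‖ ^ 2))
    have h2 : 4 * ‖Φd θ‖ ^ 2 - 4 * ‖c‖ ^ 2 * 1
        = 4 * ‖Φd θ‖ ^ 2 - 4 * ‖c‖ ^ 2 := by ring
    rw [h2] at h
    have heq : (fun x => 4 * ‖ζd x θ‖ ^ 2
        - 4 * ‖(inner ℂ (ζ x θ) (ζd x θ) : ℂ)‖ ^ 2 / ‖ζ x θ‖ ^ 2)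
        = fun x => 4 * ‖ζd x θ‖ ^ 2 - 4 * ‖c‖ ^ 2 * ‖ζ x θ‖ ^ 2 :=
      funext hterm
    rw [heq]
    exact h
  have key : 4 * (‖Φd θ‖ ^ 2 - ‖c‖ ^ 2) =
      ∑' x, (4 * ‖ζd x θ‖ ^ 2
        - 4 * ‖(inner ℂ (ζ x θ) (ζd x θ) : ℂ)‖ ^ 2 / ‖ζ x θ‖ ^ 2) := by
    rw [hF.tsum_eq]; ring
  refine ⟨key, ?_⟩
  rw [key]
  refine tsum_congr fun x => ?_
  have h0 : (‖ζ x θ‖ : ℝ) ≠ 0 := hnz x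
  field_simp
end

section
/- Let Φ : ℝ → ℂ^m ⊗ ℂ^k be a differentiable family of unit vectors and θ₀ ∈ ℝ. Then there exists an orthonormal basis (e_x)_{x=1}^k of ℂ^k such that, writing Φ(θ) = Σ_{x=1}^k ζ_x(θ) ⊗ e_x with ζ_x(θ) ∈ ℂ^m, one has ⟨ζ_x(θ₀), ∂_θζ_x(θ₀)⟩ = ⟨Φ(θ₀), ∂_θΦ(θ₀)⟩ ‖ζ_x(θ₀)‖² for every x = 1, …, k. -/
open ComplexConjugate

variable {k : ℕ}

noncomputable def qf (M : Matrix (Fin k) (Fin k) ℂ) (u v : EuclideanSpace ℂ (Fin k)) : ℂ :=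
  ∑ j, ∑ j', u j * conj (v j') * M j j'

lemma qf_add_left (M : Matrix (Fin k) (Fin k) ℂ) (u u' v : EuclideanSpace ℂ (Fin k)) :
    qf M (u + u') v = qf M u v + qf M u' v := by
  simp [qf, add_mul, Finset.sum_add_distrib]

lemma qf_add_right (M : Matrix (Fin k) (Fin k) ℂ) (u v v' : EuclideanSpace ℂ (Fin k)) :
    qf M u (v + v') = qf M u v + qf M u v' := by
  simp [qf, mul_add, add_mul, Finset.sum_add_distrib]

lemma qf_smul_left (M : Matrix (Fin k) (Fin k) ℂ) (a : ℂ) (u v : EuclideanSpace ℂ (Fin k)) :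
    qf M (a • u) v = a * qf M u v := by
  simp [qf, Finset.mul_sum, mul_assoc]

lemma qf_smul_right (M : Matrix (Fin k) (Fin k) ℂ) (a : ℂ) (u v : EuclideanSpace ℂ (Fin k)) :
    qf M u (a • v) = conj a * qf M u v := by
  simp [qf, Finset.mul_sum]
  ring_nf
  simp [mul_comm, mul_assoc, mul_left_comm]

lemma qf_expand (M : Matrix (Fin k) (Fin k) ℂ) (a b c d : ℂ) (u w : EuclideanSpace ℂ (Fin k)) :
    qf M (a • u + b • w) (c • u + d • w)
      = a * conj c * qf M u u + a * conj d * qf M u w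
        + b * conj c * qf M w u + b * conj d * qf M w w := by
  rw [qf_add_left, qf_add_right, qf_add_right, qf_smul_left, qf_smul_left,
    qf_smul_right, qf_smul_right, qf_smul_right, qf_smul_right,
    qf_smul_left, qf_smul_left]
  ring

lemma pair_step (M : Matrix (Fin k) (Fin k) ℂ) (μ : ℂ) (u w : EuclideanSpace ℂ (Fin k))
    (hα : (μ * qf M u u).re ≤ 0) (hβ : 0 ≤ (μ * qf M w w).re) :
    ∃ a b c d : ℂ, ∃ r : ℝ,
      conj a * a + conj b * b = 1 ∧ conj c * c + conj d * d = 1 ∧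
      conj a * c + conj b * d = 0 ∧
      qf M (a • u + b • w) (a • u + b • w)
        = qf M u u + (r : ℂ) * (qf M w w - qf M u u) ∧
      (μ * qf M (a • u + b • w) (a • u + b • w)).re = 0 ∧
      qf M (a • u + b • w) (a • u + b • w) + qf M (c • u + d • w) (c • u + d • w)
        = qf M u u + qf M w w := by
  set α := qf M u u with hαdef
  set β := qf M w w with hβdef
  set P := qf M u w with hPdef
  set Q := qf M w u with hQdef
  by_cases hδ : β - α = 0
  · have hβα : β = α := sub_eq_zero.mp hδ
    refine ⟨1, 0, 0, 1, 0, by simp, by simp, by simp, ?_, ?_, ?_⟩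
    · rw [qf_expand]; simp; rfl
    · rw [qf_expand]; simp only [map_one, map_zero]
      have : (μ * α).re = 0 := le_antisymm hα (hβα ▸ hβ)
      simpa using this
    · rw [qf_expand, qf_expand]; simp only [map_one, map_zero]; ring
  · set w₀ := Q / (β - α) - conj (P / (β - α)) with hw₀
    set z : ℂ := if w₀ = 0 then 1 else conj w₀ / ‖w₀‖ with hz
    have hzz : conj z * z = 1 := by
      rw [hz]
      split_ifs with h
      · simp
      · have hn : ((‖w₀‖ : ℂ)) ≠ 0 := by simpa using h
        rw [map_div₀, Complex.conj_conj, Complex.conj_ofReal, div_mul_div_comm,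
          Complex.mul_conj']
        rw [div_eq_one_iff_eq (mul_ne_zero hn hn)]
        push_cast
        ring
    have hzwim : (z * w₀).im = 0 := by
      rw [hz]
      split_ifs with h
      · simp [h]
      · rw [div_mul_eq_mul_div, mul_comm, Complex.mul_conj']
        simp [Complex.div_im]
        left
        norm_cast
    have hGim : ((conj z * P + z * Q) / (β - α)).im = 0 := by
      have h1 : (conj z * P + z * Q) / (β - α)
          = conj z * (P / (β - α)) + z * (Q / (β - α)) := by
        field_simp
      rw [h1]
      have h2 : ∀ A B : ℂ, (conj z * A + z * B).im = (z * (B - conj A)).im := by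
        intro A B
        simp [Complex.mul_im, Complex.add_im, Complex.sub_im, Complex.sub_re]
        ring
      rw [h2, ← hw₀]
      exact hzwim
    set s := ((conj z * P + z * Q) / (β - α)).re with hs
    have hG : conj z * P + z * Q = (s : ℂ) * (β - α) := by
      have h3 : (conj z * P + z * Q) / (β - α) = (s : ℂ) :=
        Complex.ext (by simp [hs]) (by simp [hGim])
      calc conj z * P + z * Q = ((conj z * P + z * Q) / (β - α)) * (β - α) :=
            (div_mul_cancel₀ _ hδ).symm
        _ = (s : ℂ) * (β - α) := by rw [h3]
    set F : ℝ → ℝ := fun t =>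
      (μ * α).re + (Real.sin t ^ 2 + s * Real.sin t * Real.cos t) * (μ * (β - α)).re
      with hF
    have hFc : Continuous F := by fun_prop
    have hF0 : F 0 = (μ * α).re := by simp [hF]
    have hF1 : F (Real.pi / 2) = (μ * β).re := by
      rw [hF]
      simp only [Real.sin_pi_div_two, Real.cos_pi_div_two, one_pow, mul_zero, add_zero,
        one_mul, mul_one]
      rw [← Complex.add_re]
      congr 1
      ring
    have h0mem : (0 : ℝ) ∈ Set.Icc (F 0) (F (Real.pi / 2)) := by
      constructor
      · rw [hF0]; exact hα
      · rw [hF1]; exact hβ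
    obtain ⟨t₀, -, ht₀⟩ := intermediate_value_Icc
      (by positivity : (0 : ℝ) ≤ Real.pi / 2) hFc.continuousOn h0mem
    have hct : (Real.cos t₀ : ℂ) ^ 2 + (Real.sin t₀ : ℂ) ^ 2 = 1 := by
      rw [show ((Real.cos t₀ : ℂ) ^ 2 + (Real.sin t₀ : ℂ) ^ 2)
          = ((Real.cos t₀ ^ 2 + Real.sin t₀ ^ 2 : ℝ) : ℂ) by push_cast; ring,
        Real.cos_sq_add_sin_sq]
      norm_num
    set ct := (Real.cos t₀ : ℂ) with hctdef
    set st := (Real.sin t₀ : ℂ) with hstdef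
    refine ⟨ct, z * st, -st, z * ct,
      Real.sin t₀ ^ 2 + s * Real.sin t₀ * Real.cos t₀, ?_, ?_, ?_, ?_, ?_, ?_⟩
    · simp only [map_mul, hctdef, hstdef, Complex.conj_ofReal]
      linear_combination st * st * hzz + hct
    · simp only [map_mul, map_neg, hctdef, hstdef, Complex.conj_ofReal]
      linear_combination ct * ct * hzz + hct
    · simp only [map_mul, map_neg, hctdef, hstdef, Complex.conj_ofReal]
      linear_combination ct * st * hzz
    · rw [qf_expand, ← hαdef, ← hβdef, ← hPdef, ← hQdef,
        Complex.ofReal_add, Complex.ofReal_mul, Complex.ofReal_mul, Complex.ofReal_pow]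
      simp only [map_mul, hctdef, hstdef, Complex.conj_ofReal]
      linear_combination ct * st * hG + st ^ 2 * β * hzz + α * hct
    · have h4 : qf M (ct • u + (z * st) • w) (ct • u + (z * st) • w)
          = α + ((Real.sin t₀ ^ 2 + s * Real.sin t₀ * Real.cos t₀ : ℝ) : ℂ) * (β - α) := by
        rw [qf_expand, ← hαdef, ← hβdef, ← hPdef, ← hQdef,
          Complex.ofReal_add, Complex.ofReal_mul, Complex.ofReal_mul, Complex.ofReal_pow]
        simp only [map_mul, hctdef, hstdef, Complex.conj_ofReal]
        linear_combination ct * st * hG + st ^ 2 * β * hzz + α * hct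
      rw [h4]
      have h5 : μ * (α + ((Real.sin t₀ ^ 2 + s * Real.sin t₀ * Real.cos t₀ : ℝ) : ℂ) * (β - α))
          = μ * α + ((Real.sin t₀ ^ 2 + s * Real.sin t₀ * Real.cos t₀ : ℝ) : ℂ) * (μ * (β - α)) := by
        ring
      rw [h5, Complex.add_re, Complex.re_ofReal_mul]
      simpa [hF] using ht₀
    · rw [qf_expand, qf_expand, ← hαdef, ← hβdef, ← hPdef, ← hQdef]
      simp only [map_mul, map_neg, hctdef, hstdef, Complex.conj_ofReal]
      linear_combination α * hct + β * hct + (ct ^ 2 + st ^ 2) * β * hzz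

lemma sum_update₂ {G : Type*} [AddCommGroup G] {k : ℕ} (φ : Fin k → G) (i j : Fin k)
    (hij : i ≠ j) (A B : G) :
    ∑ x, Function.update (Function.update φ i A) j B x
      = ∑ x, φ x - φ i - φ j + A + B := by
  classical
  rw [Finset.sum_update_of_mem (Finset.mem_univ j)]
  rw [show Finset.univ \ {j} = Finset.univ.erase j by
    rw [Finset.sdiff_singleton_eq_erase]]
  rw [Finset.sum_update_of_mem (Finset.mem_erase.mpr ⟨hij, Finset.mem_univ i⟩)]
  rw [show (Finset.univ.erase j) \ {i} = (Finset.univ.erase j).erase i by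
    rw [Finset.sdiff_singleton_eq_erase]]
  have h1 : ∑ x, φ x = φ j + ∑ x ∈ Finset.univ.erase j, φ x :=
    (Finset.add_sum_erase _ _ (Finset.mem_univ j)).symm
  have h2 : ∑ x ∈ Finset.univ.erase j, φ x
      = φ i + ∑ x ∈ (Finset.univ.erase j).erase i, φ x :=
    (Finset.add_sum_erase _ _ (Finset.mem_erase.mpr ⟨hij, Finset.mem_univ i⟩)).symm
  rw [h1, h2]
  abel

lemma orthonormal_update₂ {k : ℕ} {e : Fin k → EuclideanSpace ℂ (Fin k)}
    (he : Orthonormal ℂ e) {i j : Fin k} (hij : i ≠ j) {a b c d : ℂ}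
    (h1 : conj a * a + conj b * b = 1) (h2 : conj c * c + conj d * d = 1)
    (h3 : conj a * c + conj b * d = 0) :
    Orthonormal ℂ (Function.update (Function.update e i (a • e i + b • e j)) j
      (c • e i + d • e j)) := by
  set v := a • e i + b • e j with hv
  set v' := c • e i + d • e j with hv'
  set f := Function.update (Function.update e i v) j v' with hfdef
  have hfj : f j = v' := Function.update_self _ _ _
  have hfi : f i = v := by
    rw [hfdef, Function.update_of_ne hij, Function.update_self]
  have hfx : ∀ x, x ≠ i → x ≠ j → f x = e x := by
    intro x hxi hxj
    rw [hfdef, Function.update_of_ne hxj, Function.update_of_ne hxi]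
  rw [orthonormal_iff_ite] at he ⊢
  have h3' : conj c * a + conj d * b = 0 := by
    have := congrArg conj h3
    simpa [mul_comm] using this
  have hii : (inner ℂ (e i) (e i) : ℂ) = 1 := by simpa using he i i
  have hjj : (inner ℂ (e j) (e j) : ℂ) = 1 := by simpa using he j j
  have hij0 : (inner ℂ (e i) (e j) : ℂ) = 0 := by simpa [hij] using he i j
  have hji0 : (inner ℂ (e j) (e i) : ℂ) = 0 := by simpa [hij.symm] using he j i
  have hvv : (inner ℂ v v : ℂ) = 1 := by
    simp [hv, inner_add_left, inner_add_right, inner_smul_left, inner_smul_right,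
      hii, hjj, hij0, hji0, -inner_self_eq_norm_sq_to_K]
    linear_combination h1
  have hv'v' : (inner ℂ v' v' : ℂ) = 1 := by
    simp [hv', inner_add_left, inner_add_right, inner_smul_left, inner_smul_right,
      hii, hjj, hij0, hji0, -inner_self_eq_norm_sq_to_K]
    linear_combination h2
  have hvv' : (inner ℂ v v' : ℂ) = 0 := by
    simp [hv, hv', inner_add_left, inner_add_right, inner_smul_left, inner_smul_right,
      hii, hjj, hij0, hji0, -inner_self_eq_norm_sq_to_K]
    linear_combination h3
  have hv'v : (inner ℂ v' v : ℂ) = 0 := by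
    simp [hv, hv', inner_add_left, inner_add_right, inner_smul_left, inner_smul_right,
      hii, hjj, hij0, hji0, -inner_self_eq_norm_sq_to_K]
    linear_combination h3'
  have hev : ∀ x, x ≠ i → x ≠ j → (inner ℂ (e x) v : ℂ) = 0 ∧ (inner ℂ v (e x) : ℂ) = 0 := by
    intro x hxi hxj
    have e1 : (inner ℂ (e x) (e i) : ℂ) = 0 := by simpa [hxi] using he x i
    have e2 : (inner ℂ (e x) (e j) : ℂ) = 0 := by simpa [hxj] using he x j
    have e3 : (inner ℂ (e i) (e x) : ℂ) = 0 := by simpa [Ne.symm hxi] using he i x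
    have e4 : (inner ℂ (e j) (e x) : ℂ) = 0 := by simpa [Ne.symm hxj] using he j x
    constructor <;>
      simp [hv, inner_add_left, inner_add_right, inner_smul_left, inner_smul_right,
        e1, e2, e3, e4]
  have hev' : ∀ x, x ≠ i → x ≠ j → (inner ℂ (e x) v' : ℂ) = 0 ∧ (inner ℂ v' (e x) : ℂ) = 0 := by
    intro x hxi hxj
    have e1 : (inner ℂ (e x) (e i) : ℂ) = 0 := by simpa [hxi] using he x i
    have e2 : (inner ℂ (e x) (e j) : ℂ) = 0 := by simpa [hxj] using he x j
    have e3 : (inner ℂ (e i) (e x) : ℂ) = 0 := by simpa [Ne.symm hxi] using he i x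
    have e4 : (inner ℂ (e j) (e x) : ℂ) = 0 := by simpa [Ne.symm hxj] using he j x
    constructor <;>
      simp [hv', inner_add_left, inner_add_right, inner_smul_left, inner_smul_right,
        e1, e2, e3, e4]
  intro x y
  by_cases hxj : x = j
  · rw [hxj]
    by_cases hyj : y = j
    · rw [hyj, hfj, if_pos rfl]; exact hv'v'
    · by_cases hyi : y = i
      · rw [hyi, hfj, hfi, if_neg (fun h => hij h.symm)]; exact hv'v
      · rw [hfj, hfx y hyi hyj, if_neg (Ne.symm hyj)]; exact (hev' y hyi hyj).2
  · by_cases hxi : x = i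
    · rw [hxi]
      by_cases hyj : y = j
      · rw [hyj, hfi, hfj, if_neg hij]; exact hvv'
      · by_cases hyi : y = i
        · rw [hyi, hfi, if_pos rfl]; exact hvv
        · rw [hfi, hfx y hyi hyj, if_neg (Ne.symm hyi)]; exact (hev y hyi hyj).2
    · by_cases hyj : y = j
      · rw [hyj, hfx x hxi hxj, hfj, if_neg hxj]; exact (hev' x hxi hxj).1
      · by_cases hyi : y = i
        · rw [hyi, hfx x hxi hxj, hfi, if_neg hxi]; exact (hev x hxi hxj).1
        · rw [hfx x hxi hxj, hfx y hyi hyj]; exact he x y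

lemma engine {k : ℕ} (M : Matrix (Fin k) (Fin k) ℂ) (μ : ℂ) :
    ∀ n : ℕ, ∀ e : Fin k → EuclideanSpace ℂ (Fin k), Orthonormal ℂ e →
      (Finset.univ.filter fun x => (μ * qf M (e x) (e x)).re ≠ 0).card ≤ n →
      (∑ x, (μ * qf M (e x) (e x)).re) = 0 →
      ∃ f : Fin k → EuclideanSpace ℂ (Fin k), Orthonormal ℂ f ∧
        (∀ x, (μ * qf M (f x) (f x)).re = 0) ∧
        (∀ x, qf M (f x) (f x) ∈ Submodule.span ℝ (Set.range fun y => qf M (e y) (e y))) ∧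
        (∑ x, qf M (f x) (f x)) = ∑ x, qf M (e x) (e x) := by
  intro n
  induction n with
  | zero =>
    intro e he hcard _
    have hall : ∀ x, (μ * qf M (e x) (e x)).re = 0 := by
      intro x; by_contra hx
      have hmem : x ∈ Finset.univ.filter fun x => (μ * qf M (e x) (e x)).re ≠ 0 :=
        Finset.mem_filter.mpr ⟨Finset.mem_univ x, hx⟩
      have := Finset.card_pos.mpr ⟨x, hmem⟩
      omega
    exact ⟨e, he, hall, fun x => Submodule.subset_span ⟨x, rfl⟩, rfl⟩
  | succ n ih =>
    intro e he hcard hsum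
    by_cases hall : ∀ x, (μ * qf M (e x) (e x)).re = 0
    · exact ⟨e, he, hall, fun x => Submodule.subset_span ⟨x, rfl⟩, rfl⟩
    push_neg at hall
    obtain ⟨x₀, hx₀⟩ := hall
    have hneg : ∃ i, (μ * qf M (e i) (e i)).re < 0 := by
      by_contra h
      push_neg at h
      have h0 : ∀ x ∈ Finset.univ, 0 ≤ (μ * qf M (e x) (e x)).re := fun x _ => h x
      have := (Finset.sum_eq_zero_iff_of_nonneg h0).mp hsum
      exact hx₀ (this x₀ (Finset.mem_univ x₀))
    have hpos : ∃ j, 0 < (μ * qf M (e j) (e j)).re := by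
      by_contra h
      push_neg at h
      have h0 : ∀ x ∈ Finset.univ, 0 ≤ -((μ * qf M (e x) (e x)).re) := fun x _ => by
        linarith [h x]
      have hsum' : ∑ x, -((μ * qf M (e x) (e x)).re) = 0 := by
        rw [Finset.sum_neg_distrib, hsum, neg_zero]
      have := (Finset.sum_eq_zero_iff_of_nonneg h0).mp hsum' x₀ (Finset.mem_univ x₀)
      exact hx₀ (by linarith)
    obtain ⟨i, hi⟩ := hneg
    obtain ⟨j, hj⟩ := hpos
    have hij : i ≠ j := by intro h; rw [h] at hi; linarith
    obtain ⟨a, b, c, d, r, h1, h2, h3, h4, h5, h6⟩ := pair_step M μ (e i) (e j) hi.le hj.le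
    set v := a • e i + b • e j with hv
    set v' := c • e i + d • e j with hv'
    set e' := Function.update (Function.update e i v) j v' with he'def
    have he' : Orthonormal ℂ e' := orthonormal_update₂ he hij h1 h2 h3
    have hq' : ∀ x, qf M (e' x) (e' x)
        = Function.update (Function.update (fun y => qf M (e y) (e y)) i (qf M v v)) j
            (qf M v' v') x := by
      intro x
      simp only [he'def, Function.update_apply]
      split_ifs <;> rfl
    have hsum2 : ∑ x, qf M (e' x) (e' x) = ∑ x, qf M (e x) (e x) := by
      rw [Finset.sum_congr rfl (fun x _ => hq' x), sum_update₂ _ i j hij]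
      linear_combination h6
    have hre' : ∑ x, (μ * qf M (e' x) (e' x)).re = 0 := by
      have key : ∀ g : Fin k → EuclideanSpace ℂ (Fin k),
          ∑ x, (μ * qf M (g x) (g x)).re = (μ * ∑ x, qf M (g x) (g x)).re := by
        intro g
        rw [Finset.mul_sum, Complex.re_sum]
      rw [key, hsum2, ← key, hsum]
    have hcard' : (Finset.univ.filter fun x => (μ * qf M (e' x) (e' x)).re ≠ 0).card ≤ n := by
      have hsub : (Finset.univ.filter fun x => (μ * qf M (e' x) (e' x)).re ≠ 0)
          ⊆ (Finset.univ.filter fun x => (μ * qf M (e x) (e x)).re ≠ 0).erase i := by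
        intro x hx
        rw [Finset.mem_filter] at hx
        obtain ⟨-, hx⟩ := hx
        rw [Finset.mem_erase, Finset.mem_filter]
        by_cases hxj : x = j
        · subst hxj
          exact ⟨Ne.symm hij, Finset.mem_univ x, ne_of_gt hj⟩
        by_cases hxi : x = i
        · exfalso
          apply hx
          subst hxi
          rw [hq' x, Function.update_of_ne hij, Function.update_self]
          exact h5
        · refine ⟨hxi, Finset.mem_univ x, ?_⟩
          rwa [hq' x, Function.update_of_ne hxj, Function.update_of_ne hxi] at hx
      have hiMem : i ∈ Finset.univ.filter fun x => (μ * qf M (e x) (e x)).re ≠ 0 :=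
        Finset.mem_filter.mpr ⟨Finset.mem_univ i, ne_of_lt hi⟩
      have := Finset.card_le_card hsub
      rw [Finset.card_erase_of_mem hiMem] at this
      have hpos' := Finset.card_pos.mpr ⟨i, hiMem⟩
      omega
    obtain ⟨f, hf1, hf2, hf3, hf4⟩ := ih e' he' hcard' hre'
    have hmemv : qf M v v ∈ Submodule.span ℝ (Set.range fun y => qf M (e y) (e y)) := by
      rw [h4, ← Complex.real_smul]
      exact Submodule.add_mem _ (Submodule.subset_span ⟨i, rfl⟩)
        (Submodule.smul_mem _ _ (Submodule.sub_mem _ (Submodule.subset_span ⟨j, rfl⟩)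
          (Submodule.subset_span ⟨i, rfl⟩)))
    have hmemv' : qf M v' v' ∈ Submodule.span ℝ (Set.range fun y => qf M (e y) (e y)) := by
      have : qf M v' v' = qf M (e i) (e i) + qf M (e j) (e j) - qf M v v := by
        linear_combination h6
      rw [this]
      exact Submodule.sub_mem _ (Submodule.add_mem _ (Submodule.subset_span ⟨i, rfl⟩)
        (Submodule.subset_span ⟨j, rfl⟩)) hmemv
    have hspanle : Submodule.span ℝ (Set.range fun y => qf M (e' y) (e' y))
        ≤ Submodule.span ℝ (Set.range fun y => qf M (e y) (e y)) := by
      rw [Submodule.span_le]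
      rintro z ⟨y, rfl⟩
      simp only [SetLike.mem_coe]
      beta_reduce
      rw [hq' y]
      by_cases hyj : y = j
      · rw [hyj, Function.update_self]; exact hmemv'
      by_cases hyi : y = i
      · rw [Function.update_of_ne hyj, hyi, Function.update_self]; exact hmemv
      · rw [Function.update_of_ne hyj, Function.update_of_ne hyi]
        exact Submodule.subset_span ⟨y, rfl⟩
    exact ⟨f, hf1, hf2, fun x => hspanle (hf3 x), hf4.trans hsum2⟩

lemma fillmore {k : ℕ} (M : Matrix (Fin k) (Fin k) ℂ) (hM : ∑ j, M j j = 0) :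
    ∃ e : OrthonormalBasis (Fin k) ℂ (EuclideanSpace ℂ (Fin k)),
      ∀ x, qf M (e x) (e x) = 0 := by
  classical
  set b := EuclideanSpace.basisFun (Fin k) ℂ with hb
  have hqb : ∀ x, qf M (b x) (b x) = M x x := by
    intro x
    simp [qf, hb, EuclideanSpace.basisFun_apply, EuclideanSpace.single_apply,
      mul_ite, ite_mul, zero_mul, mul_zero, mul_one, one_mul, Finset.sum_ite_eq']
  have hsum0 : ∑ x, qf M ((⇑b : Fin k → EuclideanSpace ℂ (Fin k)) x) (b x) = 0 := by
    rw [Finset.sum_congr rfl fun x _ => hqb x]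
    exact hM
  have hcard1 : (Finset.univ.filter fun x =>
      ((1 : ℂ) * qf M ((⇑b : Fin k → _) x) (b x)).re ≠ 0).card ≤ k := by
    exact (Finset.card_filter_le _ _).trans (by simp)
  have hres1 : ∑ x, ((1 : ℂ) * qf M ((⇑b : Fin k → _) x) (b x)).re = 0 := by
    simp only [one_mul]
    rw [← Complex.re_sum, hsum0, Complex.zero_re]
  obtain ⟨f₁, hf₁on, hf₁z, -, hf₁sum⟩ := engine M 1 k ⇑b b.orthonormal hcard1 hres1
  have hf₁sum0 : ∑ x, qf M (f₁ x) (f₁ x) = 0 := hf₁sum.trans hsum0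
  have hre : ∀ x, (qf M (f₁ x) (f₁ x)).re = 0 := by
    intro x
    simpa using hf₁z x
  have hcard2 : (Finset.univ.filter fun x =>
      ((-Complex.I) * qf M (f₁ x) (f₁ x)).re ≠ 0).card ≤ k :=
    (Finset.card_filter_le _ _).trans (by simp)
  have hneg_re : ∀ z : ℂ, ((-Complex.I) * z).re = z.im := by
    intro z
    simp [Complex.mul_re]
  have hres2 : ∑ x, ((-Complex.I) * qf M (f₁ x) (f₁ x)).re = 0 := by
    simp only [hneg_re]
    rw [← Complex.im_sum, hf₁sum0, Complex.zero_im]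
  obtain ⟨f₂, hf₂on, hf₂z, hf₂span, -⟩ := engine M (-Complex.I) k f₁ hf₁on hcard2 hres2
  have hzero : ∀ x, qf M (f₂ x) (f₂ x) = 0 := by
    intro x
    have him : (qf M (f₂ x) (f₂ x)).im = 0 := by
      have := hf₂z x
      rwa [hneg_re] at this
    have hrespan : (qf M (f₂ x) (f₂ x)).re = 0 := by
      have hle : Submodule.span ℝ (Set.range fun y => qf M (f₁ y) (f₁ y))
          ≤ LinearMap.ker Complex.reLm := by
        rw [Submodule.span_le]
        rintro z ⟨y, rfl⟩
        simpa [LinearMap.mem_ker] using hre y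
      exact hle (hf₂span x)
    exact Complex.ext hrespan him
  rcases Nat.eq_zero_or_pos k with hk | hk
  · subst hk
    exact ⟨EuclideanSpace.basisFun (Fin 0) ℂ, fun x => x.elim0⟩
  haveI : Nonempty (Fin k) := ⟨⟨0, hk⟩⟩
  have hli := hf₂on.linearIndependent
  have hcardeq : Fintype.card (Fin k)
      = Module.finrank ℂ (EuclideanSpace ℂ (Fin k)) := by
    simp [finrank_euclideanSpace_fin]
  let bas := basisOfLinearIndependentOfCardEqFinrank hli hcardeq
  have hbas : ⇑bas = f₂ := coe_basisOfLinearIndependentOfCardEqFinrank hli hcardeq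
  refine ⟨bas.toOrthonormalBasis (by rwa [hbas]), ?_⟩
  intro x
  have : (bas.toOrthonormalBasis (by rwa [hbas])) x = f₂ x := by
    rw [Module.Basis.coe_toOrthonormalBasis, hbas]
  rw [this]
  exact hzero x

lemma expand_sum {m k : ℕ} (g h : Fin m × Fin k → ℂ) (w : Fin k → ℂ) :
    ∑ i, (conj (∑ j, conj (w j) * g (i, j))) * (∑ j, conj (w j) * h (i, j))
      = ∑ j, ∑ j', w j * conj (w j') * (∑ i, conj (g (i, j)) * h (i, j')) := by
  have step1 : ∀ i, (conj (∑ j, conj (w j) * g (i, j))) * (∑ j, conj (w j) * h (i, j))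
      = ∑ j, ∑ j', w j * conj (w j') * (conj (g (i, j)) * h (i, j')) := by
    intro i
    rw [map_sum, Finset.sum_mul_sum]
    refine Finset.sum_congr rfl fun j _ => Finset.sum_congr rfl fun j' _ => ?_
    rw [map_mul, Complex.conj_conj]
    ring
  rw [Finset.sum_congr rfl fun i _ => step1 i, Finset.sum_comm]
  refine Finset.sum_congr rfl fun j _ => ?_
  rw [Finset.sum_comm]
  refine Finset.sum_congr rfl fun j' _ => ?_
  rw [Finset.mul_sum]

/-- (Existence part of Theorem 1.) For a differentiable family of unit
vectors `Φ(θ) ∈ ℂ^m ⊗ ℂ^k` (coordinates indexed by `Fin m × Fin k`) and any `θ₀`, there is an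
orthonormal basis `(eₓ)` of `ℂ^k` such that the conditional signal vectors
`ζₓ(θ)ᵢ = Σⱼ conj(eₓⱼ) Φ(θ)ᵢⱼ` satisfy the zero-diagonal condition
`⟨ζₓ, ∂ζₓ⟩ = ⟨Φ, ∂Φ⟩ ‖ζₓ‖²` at `θ₀` for every `x`. -/
theorem exists_zero_diagonal_idler_basis
    {m k : ℕ}
    (Φ : ℝ → EuclideanSpace ℂ (Fin m × Fin k))
    (Φd : ℝ → EuclideanSpace ℂ (Fin m × Fin k))
    (hΦ : ∀ t, HasDerivAt Φ (Φd t) t)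
    (hunit : ∀ t, ‖Φ t‖ = 1)
    (θ₀ : ℝ) :
    ∃ e : OrthonormalBasis (Fin k) ℂ (EuclideanSpace ℂ (Fin k)),
      ∀ x : Fin k,
        (∑ i : Fin m, conj (∑ j : Fin k, conj (e x j) * Φ θ₀ (i, j)) *
            (∑ j : Fin k, conj (e x j) * Φd θ₀ (i, j)))
          = (inner ℂ (Φ θ₀) (Φd θ₀) : ℂ) *
            ((∑ i : Fin m, ‖∑ j : Fin k, conj (e x j) * Φ θ₀ (i, j)‖ ^ 2 : ℝ) : ℂ) := by
  classical
  set c : ℂ := (inner ℂ (Φ θ₀) (Φd θ₀) : ℂ) with hc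
  set M : Matrix (Fin k) (Fin k) ℂ := fun j j' =>
    (∑ i, conj (Φ θ₀ (i, j)) * Φd θ₀ (i, j'))
      - c * ∑ i, conj (Φ θ₀ (i, j)) * Φ θ₀ (i, j') with hM
  have hinner : c = ∑ j, ∑ i, conj (Φ θ₀ (i, j)) * Φd θ₀ (i, j) := by
    rw [hc, PiLp.inner_apply, Fintype.sum_prod_type, Finset.sum_comm]
    simp [RCLike.inner_apply, mul_comm]
  have hnorm : ∑ j, ∑ i, conj (Φ θ₀ (i, j)) * Φ θ₀ (i, j) = 1 := by
    have h1 : (inner ℂ (Φ θ₀) (Φ θ₀) : ℂ) = (1 : ℂ) := by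
      rw [inner_self_eq_norm_sq_to_K, hunit θ₀]
      norm_num
    rw [← h1, PiLp.inner_apply, Fintype.sum_prod_type, Finset.sum_comm]
    simp [RCLike.inner_apply, Complex.conj_mul']
  have htr : ∑ j, M j j = 0 := by
    rw [hM]
    simp only
    rw [Finset.sum_sub_distrib, ← Finset.mul_sum, hnorm, ← hinner]
    ring
  obtain ⟨e, he⟩ := fillmore M htr
  refine ⟨e, fun x => ?_⟩
  have hq := he x
  have hqe : qf M ((e : Fin k → EuclideanSpace ℂ (Fin k)) x) (e x)
      = (∑ j, ∑ j', (e x) j * conj ((e x) j') * (∑ i, conj (Φ θ₀ (i, j)) * Φd θ₀ (i, j')))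
        - c * (∑ j, ∑ j', (e x) j * conj ((e x) j') *
            (∑ i, conj (Φ θ₀ (i, j)) * Φ θ₀ (i, j'))) := by
    rw [qf, hM, Finset.mul_sum, ← Finset.sum_sub_distrib]
    refine Finset.sum_congr rfl fun j _ => ?_
    rw [Finset.mul_sum, ← Finset.sum_sub_distrib]
    refine Finset.sum_congr rfl fun j' _ => ?_
    ring
  have hL : ∑ i : Fin m, conj (∑ j : Fin k, conj ((e x) j) * Φ θ₀ (i, j)) *
      (∑ j : Fin k, conj ((e x) j) * Φd θ₀ (i, j))
      = ∑ j, ∑ j', (e x) j * conj ((e x) j') * (∑ i, conj (Φ θ₀ (i, j)) * Φd θ₀ (i, j')) :=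
    expand_sum (fun p => Φ θ₀ p) (fun p => Φd θ₀ p) (fun j => (e x) j)
  have hR : ((∑ i : Fin m, ‖∑ j : Fin k, conj ((e x) j) * Φ θ₀ (i, j)‖ ^ 2 : ℝ) : ℂ)
      = ∑ j, ∑ j', (e x) j * conj ((e x) j') * (∑ i, conj (Φ θ₀ (i, j)) * Φ θ₀ (i, j')) := by
    rw [← expand_sum (fun p => Φ θ₀ p) (fun p => Φ θ₀ p) (fun j => (e x) j),
      Complex.ofReal_sum]
    refine Finset.sum_congr rfl fun i _ => ?_
    rw [Complex.ofReal_pow, ← Complex.mul_conj', mul_comm]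
  rw [hqe] at hq
  rw [hL, hR]
  linear_combination hq
end

section
/- Let (ξ_n)_{n=1}^k be the standard orthonormal basis of ℂ^k, r ∈ ℂ^k, and θ ↦ φ_n(θ) ∈ H_S differentiable families in a complex Hilbert space H_S. Set N(θ) := 1 − Σ_n |r_n|²‖φ_n(θ)‖² with 0 ≤ N(θ) < 1, let V be a k×k unitary matrix with entries V_{mn}, define the conditional vectors ζ_x(θ) := (1−N(θ))^{−1/2} Σ_n r_n conj(V_{nx}) φ_n(θ), and define the operator X(θ) on ℂ^k by matrix entries X_{mn}(θ) := r_m conj(r_n) ⟨φ_n(θ), ∂_θφ_m(θ)⟩. Then for every x = 1, …, k: ⟨ζ_x(θ), ∂_θζ_x(θ)⟩ = (∂_θN/(2(1−N))) ‖ζ_x(θ)‖² + (1/(1−N)) ⟨Vξ_x, X(θ) Vξ_x⟩. -/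
open ComplexConjugate Matrix

/-- For the conditional signal states
`ζₓ(θ) = (1-N(θ))^{-1/2} Σₙ rₙ conj(V_{nx}) φₙ(θ)` of the idler-to-signal 1-LOCC scheme with
unitary preparation `V`, one has
`⟨ζₓ, ∂ζₓ⟩ = (∂N/(2(1-N)))‖ζₓ‖² + (1/(1-N)) ⟨Vξₓ, X Vξₓ⟩`, where `X` is the idler-space
operator with entries `X_{mn} = r_m conj(r_n) ⟨φₙ, ∂φₘ⟩` and `Vξₓ` is the `x`-th column
of `V`. -/
theorem conditional_state_overlap_formula
    {H_S : Type*} [NormedAddCommGroup H_S] [InnerProductSpace ℂ H_S]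
    {k : ℕ}
    (r : Fin k → ℂ) (φ φd : Fin k → ℝ → H_S)
    (hφ : ∀ n t, HasDerivAt (φ n) (φd n t) t)
    (N : ℝ → ℝ) (hN : ∀ t, N t = 1 - ∑ n, ‖r n‖ ^ 2 * ‖φ n t‖ ^ 2)
    (θ : ℝ) (hN0 : 0 ≤ N θ) (hN1 : N θ < 1)
    (N' : ℝ) (hN' : HasDerivAt N N' θ)
    (V : Matrix (Fin k) (Fin k) ℂ) (hV : Vᴴ * V = 1)
    (ζ : Fin k → ℝ → H_S)
    (hζ : ∀ x t, ζ x t =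
      ((Real.sqrt (1 - N t) : ℝ) : ℂ)⁻¹ • ∑ n, (r n * conj (V n x)) • φ n t)
    (X : Matrix (Fin k) (Fin k) ℂ)
    (hX : ∀ m n, X m n = r m * conj (r n) * (inner ℂ (φ n θ) (φd m θ) : ℂ)) :
    ∀ x : Fin k, ∃ ζd : H_S, HasDerivAt (ζ x) ζd θ ∧
      (inner ℂ (ζ x θ) ζd : ℂ) =
        ((N' / (2 * (1 - N θ)) : ℝ) : ℂ) * ((‖ζ x θ‖ ^ 2 : ℝ) : ℂ)
          + ((1 / (1 - N θ) : ℝ) : ℂ) *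
              (star (fun m : Fin k => V m x) ⬝ᵥ X.mulVec (fun n : Fin k => V n x)) := by
  intro x
  have hpos : (0:ℝ) < 1 - N θ := by linarith
  set s : ℝ := Real.sqrt (1 - N θ) with hs_def
  have hs : 0 < s := Real.sqrt_pos.mpr hpos
  have hs2 : s ^ 2 = 1 - N θ := Real.sq_sqrt hpos.le
  have hsne : s ≠ 0 := ne_of_gt hs
  have hsCne : ((s:ℝ):ℂ) ≠ 0 := Complex.ofReal_ne_zero.mpr hsne
  -- derivative of the sum part
  have hS : HasDerivAt (fun t => ∑ n, (r n * conj (V n x)) • φ n t)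
      (∑ n, (r n * conj (V n x)) • φd n θ) θ :=
    HasDerivAt.fun_sum fun n _ => HasDerivAt.const_smul _ (hφ n θ)
  -- derivative of the real scalar
  have hg1 : HasDerivAt (fun t => 1 - N t) (-N') θ := by
    simpa using (hasDerivAt_const θ (1:ℝ)).fun_sub hN'
  have hsqrt : HasDerivAt (fun t => Real.sqrt (1 - N t)) (-N' / (2 * s)) θ := by
    have h := (Real.hasDerivAt_sqrt (ne_of_gt hpos)).comp θ hg1
    refine h.congr_deriv ?_
    rw [hs_def]
    field_simp
  have hg : HasDerivAt (fun t => (Real.sqrt (1 - N t))⁻¹) (N' / (2 * s ^ 3)) θ := by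
    have h := hsqrt.inv hsne
    rw [← hs_def] at h
    refine h.congr_deriv ?_
    ring
  have hgC : HasDerivAt (fun t => ((Real.sqrt (1 - N t) : ℝ) : ℂ)⁻¹)
      (((N' / (2 * s ^ 3) : ℝ)) : ℂ) θ := by
    simpa [Complex.ofReal_inv] using hg.ofReal_comp
  have hform : ζ x = fun t =>
      ((Real.sqrt (1 - N t) : ℝ) : ℂ)⁻¹ • ∑ n, (r n * conj (V n x)) • φ n t :=
    funext (hζ x)
  refine ⟨((s:ℝ):ℂ)⁻¹ • (∑ n, (r n * conj (V n x)) • φd n θ)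
      + (((N' / (2 * s ^ 3) : ℝ)) : ℂ) • (∑ n, (r n * conj (V n x)) • φ n θ), ?_, ?_⟩
  · rw [hform]
    exact hgC.smul hS
  -- the inner product identity
  have hA : (inner ℂ (∑ n, (r n * conj (V n x)) • φ n θ)
        (∑ n, (r n * conj (V n x)) • φd n θ) : ℂ) =
      star (fun m : Fin k => V m x) ⬝ᵥ X.mulVec (fun n : Fin k => V n x) := by
    simp only [sum_inner, inner_sum, inner_smul_left, inner_smul_right,
      dotProduct, Matrix.mulVec, Pi.star_apply, hX, Finset.mul_sum]
    refine Finset.sum_congr rfl fun m _ => Finset.sum_congr rfl fun n _ => ?_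
    simp only [_root_.map_mul, Complex.conj_conj, RingHomCompTriple.comp_apply, RCLike.star_def, RingHom.id_apply]
    ring
  have hnorm : (‖ζ x θ‖ : ℝ) ^ 2 =
      (s⁻¹) ^ 2 * ‖∑ n, (r n * conj (V n x)) • φ n θ‖ ^ 2 := by
    rw [hζ x θ, norm_smul, mul_pow, norm_inv, Complex.norm_real,
      Real.norm_eq_abs, abs_of_pos hs]
  rw [hnorm, hζ x θ, inner_add_right, inner_smul_left, inner_smul_right, inner_smul_left,
    inner_smul_right, ← hA, inner_self_eq_norm_sq_to_K]
  set T : ℂ := inner ℂ (∑ n, (r n * conj (V n x)) • φ n θ)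
      (∑ n, (r n * conj (V n x)) • φd n θ) with hT
  set M : ℝ := ‖∑ n, (r n * conj (V n x)) • φ n θ‖ with hM
  rw [← hs_def]
  rw [← hs2]
  simp only [map_inv₀, Complex.conj_ofReal]
  rw [RCLike.ofReal_eq_complex_ofReal]
  push_cast
  field_simp
  ring
end

section
/- Let H be a complex Hilbert space, v ∈ H a fixed unit vector, and θ ↦ Φ(θ) ∈ H a differentiable family of nonzero vectors with ⟨v, Φ(θ)⟩ = 0 for all θ (hence ⟨v, ∂_θΦ⟩ = 0). Set Λ(θ) := ‖Φ(θ)‖² and M(θ) := 1 + Λ(θ), and define the unit vectors ψ_biph(θ) := Φ(θ)/√Λ(θ) and ψ_PDC(θ) := (v + Φ(θ))/√M(θ). Then Λ·Q(θ; ψ_biph) = 4‖∂_θΦ‖² − (4/Λ)|⟨Φ, ∂_θΦ⟩|² and M·Q(θ; ψ_PDC) = 4‖∂_θΦ‖² − (4/M)|⟨Φ, ∂_θΦ⟩|²; consequently Q(θ; ψ_biph) = (M/Λ) Q(θ; ψ_PDC) − (4/(M Λ²)) |⟨Φ, ∂_θΦ⟩|². -/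
open ComplexConjugate

private lemma qfi_core {H : Type*} [NormedAddCommGroup H] [InnerProductSpace ℂ H]
    (F Fd : ℝ → H) (hF : ∀ t, HasDerivAt F (Fd t) t)
    (N : ℝ → ℝ) (hN : ∀ t, N t = ‖F t‖ ^ 2)
    (ψ : ℝ → H) (hψ : ∀ t, ψ t = ((Real.sqrt (N t) : ℝ) : ℂ)⁻¹ • F t)
    (θ : ℝ) (hne : F θ ≠ 0) :
    ∃ ψd, HasDerivAt ψ ψd θ ∧
      N θ * (4 * (‖ψd‖ ^ 2 - ‖(inner ℂ (ψ θ) ψd : ℂ)‖ ^ 2)) =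
        4 * ‖Fd θ‖ ^ 2 - 4 / N θ * ‖(inner ℂ (F θ) (Fd θ) : ℂ)‖ ^ 2 := by
  have hnpos : 0 < N θ := by
    rw [hN]; exact pow_pos (norm_pos_iff.2 hne) 2
  set n := N θ with hn
  set s := Real.sqrt n with hs
  have hspos : 0 < s := Real.sqrt_pos.2 hnpos
  have hs2 : s * s = n := Real.mul_self_sqrt hnpos.le
  set b : ℂ := (inner ℂ (F θ) (Fd θ) : ℂ) with hb
  set a : ℝ := b.re with ha
  set d : ℝ := ‖Fd θ‖ ^ 2 with hd
  set α : ℝ := -(a / (n * s)) with hα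
  set β : ℝ := s⁻¹ with hβ
  -- derivative of N
  have hI : HasDerivAt (fun t => (inner ℂ (F t) (F t) : ℂ))
      ((inner ℂ (F θ) (Fd θ) : ℂ) + (inner ℂ (Fd θ) (F θ) : ℂ)) θ :=
    (hF θ).inner ℂ (hF θ)
  have hNder : HasDerivAt N (2 * a) θ := by
    have h2 : HasDerivAt (fun t => ((inner ℂ (F t) (F t) : ℂ)).re)
        (((inner ℂ (F θ) (Fd θ) : ℂ) + (inner ℂ (Fd θ) (F θ) : ℂ)).re) θ :=
      Complex.reCLM.hasFDerivAt.comp_hasDerivAt θ hI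
    have hfun : N = fun t => ((inner ℂ (F t) (F t) : ℂ)).re := by
      funext t
      rw [hN, inner_self_eq_norm_sq_to_K]
      norm_cast
    rw [hfun]
    convert h2 using 1
    rw [← inner_conj_symm (Fd θ) (F θ)]
    simp only [Complex.add_re, Complex.conj_re, ← hb, ← ha]
    ring
  have hsder : HasDerivAt (fun t => Real.sqrt (N t)) (2 * a / (2 * s)) θ :=
    hNder.sqrt hnpos.ne'
  have hsne : ((s : ℝ) : ℂ) ≠ 0 := by exact_mod_cast hspos.ne'
  have hsinv : HasDerivAt (fun t => (Real.sqrt (N t))⁻¹) (-(2 * a / (2 * s)) / s ^ 2) θ :=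
    hsder.inv hspos.ne'
  have hinv : HasDerivAt (fun t => (((Real.sqrt (N t))⁻¹ : ℝ) : ℂ))
      (((-(2 * a / (2 * s)) / s ^ 2 : ℝ) : ℝ) : ℂ) θ := hsinv.ofReal_comp
  set ψd : H := ((α : ℝ) : ℂ) • F θ + ((β : ℝ) : ℂ) • Fd θ with hψd
  have hscalR : -(2 * a / (2 * s)) / s ^ 2 = α := by
    rw [hα, ← hs2]
    field_simp
  have hder : HasDerivAt ψ ψd θ := by
    have h3 := hinv.smul (hF θ)
    rw [hscalR] at h3
    have hfun : ψ = fun t => (((Real.sqrt (N t))⁻¹ : ℝ) : ℂ) • F t := by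
      funext t
      rw [hψ t, Complex.ofReal_inv]
    rw [hfun]
    have e : (((Real.sqrt (N θ))⁻¹ : ℝ) : ℂ) • Fd θ + ((α : ℝ) : ℂ) • F θ = ψd := by
      rw [hψd, add_comm]
    exact e ▸ h3
  refine ⟨ψd, hder, ?_⟩
  -- now the algebra
  have hFF : (inner ℂ (F θ) (F θ) : ℂ) = ((n : ℝ) : ℂ) := by
    rw [inner_self_eq_norm_sq_to_K, hn, hN]
    norm_cast
  have h1 : ‖ψd‖ ^ 2 = α ^ 2 * n + 2 * (α * β * a) + β ^ 2 * d := by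
    rw [hψd, @norm_add_sq ℂ]
    have e1 : ‖((α : ℝ) : ℂ) • F θ‖ ^ 2 = α ^ 2 * n := by
      rw [norm_smul, mul_pow, Complex.norm_real, hn, hN]
      simp [sq_abs]
    have e2 : ‖((β : ℝ) : ℂ) • Fd θ‖ ^ 2 = β ^ 2 * d := by
      rw [norm_smul, mul_pow, Complex.norm_real, hd]
      simp [sq_abs]
    have e3 : RCLike.re (inner ℂ (((α : ℝ) : ℂ) • F θ) (((β : ℝ) : ℂ) • Fd θ) : ℂ)
        = α * β * a := by
      rw [inner_smul_left, inner_smul_right, ← hb, Complex.conj_ofReal]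
      simp [ha, Complex.mul_re]
      ring
    rw [e1, e2, e3]
  have hcval : (inner ℂ (ψ θ) ψd : ℂ)
      = ((s⁻¹ : ℝ) : ℂ) * (((α : ℝ) : ℂ) * ((n : ℝ) : ℂ) + ((β : ℝ) : ℂ) * b) := by
    rw [hψ θ, hψd, ← hs]
    rw [inner_smul_left, inner_add_right, inner_smul_right, inner_smul_right, hFF, ← hb]
    rw [← Complex.ofReal_inv, Complex.conj_ofReal]
  have h2 : ‖(inner ℂ (ψ θ) ψd : ℂ)‖ ^ 2
      = (s⁻¹) ^ 2 * ((α * n + β * a) ^ 2 + (β * b.im) ^ 2) := by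
    rw [Complex.sq_norm, hcval, Complex.normSq_apply]
    simp [Complex.mul_re, Complex.mul_im, Complex.add_re, Complex.add_im, ← ha]
    ring
  have h3 : ‖(inner ℂ (F θ) (Fd θ) : ℂ)‖ ^ 2 = a ^ 2 + b.im ^ 2 := by
    rw [← hb, Complex.sq_norm, Complex.normSq_apply, ← ha]
    ring
  rw [h1, h2, h3]
  rw [hα, hβ]
  have hsne' : s ≠ 0 := hspos.ne'
  rw [← hs2]
  field_simp
  ring

/-- (Exact relation between the QFI of the PDC state and of the
post-selected biphoton state, Appendix F.) With `Λ = ‖Φ‖²`, `M = 1 + Λ`,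
`ψ_biph = Φ/√Λ` and `ψ_PDC = (v + Φ)/√M` for a unit vector `v ⊥ Φ(θ)`:
`Λ·Q(ψ_biph) = 4‖∂Φ‖² - (4/Λ)|⟨Φ,∂Φ⟩|²`, `M·Q(ψ_PDC) = 4‖∂Φ‖² - (4/M)|⟨Φ,∂Φ⟩|²`, and
`Q(ψ_biph) = (M/Λ)Q(ψ_PDC) - (4/(MΛ²))|⟨Φ,∂Φ⟩|²`. -/
theorem pdc_biphoton_QFI_relation
    {H : Type*} [NormedAddCommGroup H] [InnerProductSpace ℂ H]
    (v : H) (hv : ‖v‖ = 1)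
    (Φ Φd : ℝ → H) (hΦ : ∀ t, HasDerivAt Φ (Φd t) t)
    (hne : ∀ t, Φ t ≠ 0) (horth : ∀ t, (inner ℂ v (Φ t) : ℂ) = 0)
    (Λ M : ℝ → ℝ) (hΛ : ∀ t, Λ t = ‖Φ t‖ ^ 2) (hM : ∀ t, M t = 1 + Λ t)
    (ψb ψp : ℝ → H)
    (hψb : ∀ t, ψb t = ((Real.sqrt (Λ t) : ℝ) : ℂ)⁻¹ • Φ t)
    (hψp : ∀ t, ψp t = ((Real.sqrt (M t) : ℝ) : ℂ)⁻¹ • (v + Φ t))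
    (θ : ℝ) :
    ∃ ψbd ψpd : H, HasDerivAt ψb ψbd θ ∧ HasDerivAt ψp ψpd θ ∧
      Λ θ * (4 * (‖ψbd‖ ^ 2 - ‖(inner ℂ (ψb θ) ψbd : ℂ)‖ ^ 2)) =
          4 * ‖Φd θ‖ ^ 2 - 4 / Λ θ * ‖(inner ℂ (Φ θ) (Φd θ) : ℂ)‖ ^ 2 ∧
      M θ * (4 * (‖ψpd‖ ^ 2 - ‖(inner ℂ (ψp θ) ψpd : ℂ)‖ ^ 2)) =
          4 * ‖Φd θ‖ ^ 2 - 4 / M θ * ‖(inner ℂ (Φ θ) (Φd θ) : ℂ)‖ ^ 2 ∧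
      4 * (‖ψbd‖ ^ 2 - ‖(inner ℂ (ψb θ) ψbd : ℂ)‖ ^ 2) =
          M θ / Λ θ * (4 * (‖ψpd‖ ^ 2 - ‖(inner ℂ (ψp θ) ψpd : ℂ)‖ ^ 2))
            - 4 / (M θ * (Λ θ) ^ 2) * ‖(inner ℂ (Φ θ) (Φd θ) : ℂ)‖ ^ 2 := by
  -- biphoton part
  obtain ⟨ψbd, hbd, hb⟩ := qfi_core Φ Φd hΦ Λ hΛ ψb hψb θ (hne θ)
  -- PDC part
  have hG : ∀ t, HasDerivAt (fun t => v + Φ t) (Φd t) t := by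
    intro t
    simpa using (hΦ t).const_add v
  have hMnorm : ∀ t, M t = ‖v + Φ t‖ ^ 2 := by
    intro t
    rw [hM t, hΛ t, @norm_add_sq ℂ, hv, horth t]
    simp
  have hΛpos : 0 < Λ θ := by
    rw [hΛ]; exact pow_pos (norm_pos_iff.2 (hne θ)) 2
  have hMpos : 0 < M θ := by rw [hM]; linarith
  have hGne : v + Φ θ ≠ 0 := by
    intro h
    have : M θ = 0 := by rw [hMnorm θ, h]; simp
    exact hMpos.ne' this
  obtain ⟨ψpd, hpd, hp⟩ := qfi_core (fun t => v + Φ t) Φd hG M hMnorm ψp hψp θ hGne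
  -- ⟨v, Φd θ⟩ = 0
  have hvd : (inner ℂ v (Φd θ) : ℂ) = 0 := by
    have h1 : HasDerivAt (fun t => (inner ℂ v (Φ t) : ℂ))
        ((inner ℂ v (Φd θ) : ℂ) + (inner ℂ (0 : H) (Φ θ) : ℂ)) θ :=
      (hasDerivAt_const θ v).inner ℂ (hΦ θ)
    have h2 : (fun t => (inner ℂ v (Φ t) : ℂ)) = fun _ => (0 : ℂ) := funext horth
    rw [h2] at h1
    have := (hasDerivAt_const θ (0 : ℂ)).unique h1
    simpa using this.symm
  have hinner : (inner ℂ (v + Φ θ) (Φd θ) : ℂ) = (inner ℂ (Φ θ) (Φd θ) : ℂ) := by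
    rw [inner_add_left, hvd, zero_add]
  rw [hinner] at hp
  refine ⟨ψbd, ψpd, hbd, hpd, hb, hp, ?_⟩
  have hΛne : Λ θ ≠ 0 := hΛpos.ne'
  have hMne : M θ ≠ 0 := hMpos.ne'
  have hMΛ : M θ = 1 + Λ θ := hM θ
  set Qb := 4 * (‖ψbd‖ ^ 2 - ‖(inner ℂ (ψb θ) ψbd : ℂ)‖ ^ 2) with hQb
  set Qp := 4 * (‖ψpd‖ ^ 2 - ‖(inner ℂ (ψp θ) ψpd : ℂ)‖ ^ 2) with hQp
  set Y := ‖(inner ℂ (Φ θ) (Φd θ) : ℂ)‖ ^ 2 with hY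
  have e1 : Qb = (4 * ‖Φd θ‖ ^ 2 - 4 / Λ θ * Y) / Λ θ := by
    rw [← hb, mul_comm, mul_div_assoc, div_self hΛne, mul_one]
  have e2 : Qp = (4 * ‖Φd θ‖ ^ 2 - 4 / M θ * Y) / M θ := by
    rw [← hp, mul_comm, mul_div_assoc, div_self hMne, mul_one]
  have h1Λ : (1 : ℝ) + Λ θ ≠ 0 := by rw [← hMΛ]; exact hMne
  rw [e1, e2, hMΛ]
  field_simp
  ring
end

section
/- Under the hypotheses that (ξ_n) is an orthonormal family in H_I, r_n ∈ ℂ, θ ↦ φ_n(θ) ∈ H_S are differentiable, N(θ) := 1 − Σ_n |r_n|²‖φ_n(θ)‖² with 0 ≤ N(θ) < 1, and Φ(θ) := (1−N(θ))^{−1/2} Σ_n r_n φ_n(θ) ⊗ ξ_n is norm-convergent and differentiable term by term, the following trace identity holds: Σ_n |r_n|² ⟨φ_n(θ), ∂_θφ_n(θ)⟩ = (1 − N(θ)) ⟨Φ(θ), ∂_θΦ(θ)⟩ − (∂_θN(θ))/2. -/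
open ComplexConjugate

set_option maxHeartbeats 2000000

/-- (Trace identity `Tr X = (1-N)⟨Φ, ∂Φ⟩ - ∂N/2`, Appendix C.) For
`Φ(θ) = (1-N(θ))^{-1/2} Σₙ rₙ φₙ(θ) ⊗ ξₙ` with `(ξₙ)` orthonormal and
`N(θ) = 1 - Σₙ |rₙ|²‖φₙ(θ)‖²`, one has
`Σₙ |rₙ|²⟨φₙ, ∂φₙ⟩ = (1-N)⟨Φ, ∂Φ⟩ - (∂N)/2`. -/
theorem trace_X_identity
    {H_S H_I E : Type*}
    [NormedAddCommGroup H_S] [InnerProductSpace ℂ H_S]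
    [NormedAddCommGroup H_I] [InnerProductSpace ℂ H_I]
    [NormedAddCommGroup E] [InnerProductSpace ℂ E]
    (tens : H_S →ₗ[ℂ] H_I →ₗ[ℂ] E)
    (htens : ∀ (a : H_S) (b : H_I) (c : H_S) (d : H_I),
      (inner ℂ (tens a b) (tens c d) : ℂ) = (inner ℂ a c : ℂ) * (inner ℂ b d : ℂ))
    (ξ : ℕ → H_I) (hξ : Orthonormal ℂ ξ)
    (r : ℕ → ℂ) (φ φd : ℕ → ℝ → H_S)
    (hφ : ∀ n t, HasDerivAt (φ n) (φd n t) t)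
    (hsum : ∀ t, Summable fun n => ‖r n‖ ^ 2 * ‖φ n t‖ ^ 2)
    (N : ℝ → ℝ) (hN : ∀ t, N t = 1 - ∑' n, ‖r n‖ ^ 2 * ‖φ n t‖ ^ 2)
    (θ : ℝ) (hN0 : 0 ≤ N θ) (hN1 : N θ < 1)
    (N' : ℝ) (hN' : HasDerivAt N N' θ)
    (S D : ℝ → E)
    (hS : ∀ t, HasSum (fun n => r n • tens (φ n t) (ξ n)) (S t))
    (hD : ∀ t, HasSum (fun n => r n • tens (φd n t) (ξ n)) (D t))
    (hSD : ∀ t, HasDerivAt S (D t) t)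
    (Φ : ℝ → E) (hΦ : ∀ t, Φ t = ((Real.sqrt (1 - N t) : ℝ) : ℂ)⁻¹ • S t) :
    ∃ Φd : E, HasDerivAt Φ Φd θ ∧
      ∑' n, ((‖r n‖ ^ 2 : ℝ) : ℂ) * (inner ℂ (φ n θ) (φd n θ) : ℂ) =
        ((1 - N θ : ℝ) : ℂ) * (inner ℂ (Φ θ) Φd : ℂ) - (N' : ℂ) / 2 := by
  -- abbreviations
  set s : ℝ := Real.sqrt (1 - N θ) with hs_def
  have h1N : (0:ℝ) < 1 - N θ := by linarith
  have hs_pos : 0 < s := Real.sqrt_pos.mpr h1N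
  have hs_ne : s ≠ 0 := ne_of_gt hs_pos
  have hs_sq : s ^ 2 = 1 - N θ := Real.sq_sqrt h1N.le
  -- Key inner ℂ product sum lemma
  have key : ∀ (ψ : ℕ → H_S) (T : E),
      HasSum (fun n => r n • tens (ψ n) (ξ n)) T →
      HasSum (fun n => ((‖r n‖ ^ 2 : ℝ) : ℂ) * (inner ℂ (φ n θ) (ψ n) : ℂ))
        (inner ℂ (S θ) T : ℂ) := by
    intro ψ T hT
    have step : ∀ n, (inner ℂ (S θ) (tens (ψ n) (ξ n)) : ℂ)
        = conj (r n) * (inner ℂ (φ n θ) (ψ n) : ℂ) := by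
      intro n
      have h1 : HasSum (fun m => (inner ℂ (tens (ψ n) (ξ n)) (r m • tens (φ m θ) (ξ m)) : ℂ))
          (inner ℂ (tens (ψ n) (ξ n)) (S θ) : ℂ) :=
        (hS θ).mapL (innerSL ℂ (tens (ψ n) (ξ n)))
      have h2 : (fun m => (inner ℂ (tens (ψ n) (ξ n)) (r m • tens (φ m θ) (ξ m)) : ℂ))
          = fun m => if m = n then r n * (inner ℂ (ψ n) (φ n θ) : ℂ) else 0 := by
        funext m
        rw [inner_smul_right, htens, orthonormal_iff_ite.mp hξ]
        rcases eq_or_ne m n with h | h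
        · subst h; simp
        · simp [h, Ne.symm h]
      rw [h2] at h1
      have h3 : (inner ℂ (tens (ψ n) (ξ n)) (S θ) : ℂ) = r n * (inner ℂ (ψ n) (φ n θ) : ℂ) :=
        h1.unique (hasSum_ite_eq n _)
      calc (inner ℂ (S θ) (tens (ψ n) (ξ n)) : ℂ)
          = conj (inner ℂ (tens (ψ n) (ξ n)) (S θ) : ℂ) := (inner_conj_symm _ _).symm
        _ = conj (r n * (inner ℂ (ψ n) (φ n θ) : ℂ)) := by rw [h3]
        _ = conj (r n) * (inner ℂ (φ n θ) (ψ n) : ℂ) := by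
            rw [map_mul, inner_conj_symm]
    have h4 : HasSum (fun n => (inner ℂ (S θ) (r n • tens (ψ n) (ξ n)) : ℂ))
        (inner ℂ (S θ) T : ℂ) := hT.mapL (innerSL ℂ (S θ))
    have h5 : (fun n => (inner ℂ (S θ) (r n • tens (ψ n) (ξ n)) : ℂ))
        = fun n => ((‖r n‖ ^ 2 : ℝ) : ℂ) * (inner ℂ (φ n θ) (ψ n) : ℂ) := by
      funext n
      rw [inner_smul_right, step, ← mul_assoc, RCLike.mul_conj]
      norm_cast
    rwa [h5] at h4
  -- inner ℂ (S θ) (S θ) = 1 - N θ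
  have hSS : (inner ℂ (S θ) (S θ) : ℂ) = ((1 - N θ : ℝ) : ℂ) := by
    have h1 := key (fun n => φ n θ) (S θ) (hS θ)
    have h2 : (fun n => ((‖r n‖ ^ 2 : ℝ) : ℂ) * (inner ℂ (φ n θ) (φ n θ) : ℂ))
        = fun n => ((‖r n‖ ^ 2 * ‖φ n θ‖ ^ 2 : ℝ) : ℂ) := by
      funext n
      rw [inner_self_eq_norm_sq_to_K]
      push_cast
      rfl
    rw [h2] at h1
    have h3 : HasSum (fun n => ((‖r n‖ ^ 2 * ‖φ n θ‖ ^ 2 : ℝ) : ℂ))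
        (((1 - N θ : ℝ)) : ℂ) := by
      have h4 : HasSum (fun n => ‖r n‖ ^ 2 * ‖φ n θ‖ ^ 2) (1 - N θ) := by
        have := (hsum θ).hasSum
        rwa [show (∑' n, ‖r n‖ ^ 2 * ‖φ n θ‖ ^ 2) = 1 - N θ by rw [hN θ]; ring] at this
      exact h4.mapL Complex.ofRealCLM
    exact h1.unique h3
  -- inner ℂ (S θ) (D θ) is the trace sum
  have hSD2 : (∑' n, ((‖r n‖ ^ 2 : ℝ) : ℂ) * (inner ℂ (φ n θ) (φd n θ) : ℂ))
      = (inner ℂ (S θ) (D θ) : ℂ) := (key (fun n => φd n θ) (D θ) (hD θ)).tsum_eq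
  -- differentiability of the prefactor
  have hc : HasDerivAt (fun t => (Real.sqrt (1 - N t))⁻¹) (N' / (2 * s ^ 3)) θ := by
    have h1 : HasDerivAt (fun t => 1 - N t) (-N') θ := hN'.const_sub 1
    have h2 : HasDerivAt Real.sqrt (1 / (2 * s)) (1 - N θ) :=
      Real.hasDerivAt_sqrt (ne_of_gt h1N)
    have h3 : HasDerivAt (fun t => Real.sqrt (1 - N t)) (1 / (2 * s) * (-N')) θ :=
      h2.comp θ h1
    have h4 := h3.inv hs_ne
    convert h4 using 1
    show N' / (2 * s ^ 3) = -(1 / (2 * s) * -N') / s ^ 2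
    rw [div_eq_div_iff (by positivity) (by positivity)]
    field_simp
    all_goals rfl
  have hcC : HasDerivAt (fun t => (((Real.sqrt (1 - N t))⁻¹ : ℝ) : ℂ))
      ((N' / (2 * s ^ 3) : ℝ) : ℂ) θ := hc.ofReal_comp
  -- derivative of Φ
  have hΦfun : Φ = fun t => (((Real.sqrt (1 - N t))⁻¹ : ℝ) : ℂ) • S t := by
    funext t; rw [hΦ t, Complex.ofReal_inv]
  set Φd : E := (((Real.sqrt (1 - N θ))⁻¹ : ℝ) : ℂ) • D θ
      + ((N' / (2 * s ^ 3) : ℝ) : ℂ) • S θ with hΦd_def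
  have hΦderiv : HasDerivAt Φ Φd θ := by
    rw [hΦfun]
    exact hcC.smul (hSD θ)
  refine ⟨Φd, hΦderiv, ?_⟩
  rw [hSD2, hΦ θ, hΦd_def]
  rw [inner_smul_left, inner_add_right, inner_smul_right, inner_smul_right, hSS]
  rw [map_inv₀, Complex.conj_ofReal]
  simp only [← hs_def]
  have hsC : ((s : ℂ)) ≠ 0 := by exact_mod_cast hs_ne
  have h1NC : ((1 - N θ : ℝ) : ℂ) = (s : ℂ) ^ 2 := by
    rw [← hs_sq]; push_cast; ring
  rw [h1NC]
  push_cast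
  field_simp [hsC]
  ring
end

section
/- Let A, D, b, λ₁, λ₂ ∈ ℂ, t ∈ ℝ, and let M be the symmetric 2×2 complex matrix with rows (A, b) and (b, D). Let w ∈ ℂ be any complex number with w² = (A − D)² + 4b². Then the quadratic form (λ₁, λ₂)·exp(tM)·(λ₁, λ₂)ᵀ equals e^{(A+D)t/2} [ (λ₁² + λ₂²) cosh(tw/2) + s · ( (λ₁² − λ₂²)(A − D)t/2 + 2 λ₁ λ₂ b t ) ], where s := sinh(tw/2)/(tw/2) if tw ≠ 0 and s := 1 if tw = 0 (this value is independent of the choice of square root w). -/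
open Matrix
open scoped Nat

set_option maxHeartbeats 800000 in
lemma exp_sq_smul_one (N : Matrix (Fin 2) (Fin 2) ℂ) (c s : ℂ)
    (h : N ^ 2 = c ^ 2 • (1 : Matrix (Fin 2) (Fin 2) ℂ))
    (hs : s = if c = 0 then 1 else Complex.sinh c / c) :
    NormedSpace.exp N = Complex.cosh c • (1 : Matrix (Fin 2) (Fin 2) ℂ) + s • N := by
  have hpow_even : ∀ k : ℕ, N ^ (2 * k) = (c ^ (2 * k)) • (1 : Matrix (Fin 2) (Fin 2) ℂ) := by
    intro k
    rw [pow_mul, h, smul_pow, one_pow, ← pow_mul]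
  have hpow_odd : ∀ k : ℕ, N ^ (2 * k + 1) = (c ^ (2 * k)) • N := by
    intro k
    rw [pow_succ, hpow_even, smul_mul_assoc, one_mul]
  rw [NormedSpace.exp_eq_tsum (𝕂 := ℂ)]
  refine HasSum.tsum_eq (HasSum.even_add_odd ?_ ?_)
  · have he : (fun k : ℕ => (((2 * k)! : ℂ)⁻¹) • N ^ (2 * k))
        = fun k : ℕ => (c ^ (2 * k) / ((2 * k)! : ℂ)) • (1 : Matrix (Fin 2) (Fin 2) ℂ) := by
      funext k
      rw [hpow_even, smul_smul, div_eq_inv_mul]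
    rw [show (fun k : ℕ => (((2 * k : ℕ))! : ℂ)⁻¹ • N ^ (2 * k)) = _ from he]
    exact (Complex.hasSum_cosh c).smul_const _
  · have ho : (fun k : ℕ => (((2 * k + 1)! : ℂ)⁻¹) • N ^ (2 * k + 1))
        = fun k : ℕ => (c ^ (2 * k) / ((2 * k + 1)! : ℂ)) • N := by
      funext k
      rw [hpow_odd, smul_smul, div_eq_inv_mul]
    rw [show (fun k : ℕ => (((2 * k + 1 : ℕ))! : ℂ)⁻¹ • N ^ (2 * k + 1)) = _ from ho]
    have hsum : HasSum (fun k : ℕ => c ^ (2 * k) / ((2 * k + 1)! : ℂ)) s := by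
      rcases eq_or_ne c 0 with hc | hc
      · subst hc
        rw [hs, if_pos rfl]
        have hfun : (fun k : ℕ => (0 : ℂ) ^ (2 * k) / ((2 * k + 1)! : ℂ))
            = fun k : ℕ => if k = 0 then 1 else 0 := by
          funext k
          rcases Nat.eq_zero_or_pos k with rfl | hk
          · simp
          · rw [if_neg hk.ne', zero_pow (by omega), zero_div]
        rw [hfun]
        exact hasSum_ite_eq 0 1
      · rw [hs, if_neg hc]
        have h2 := (Complex.hasSum_sinh c).div_const c
        have hf : (fun k : ℕ => c ^ (2 * k) / ((2 * k + 1)! : ℂ))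
            = fun k : ℕ => c ^ (2 * k + 1) / ((2 * k + 1)! : ℂ) / c := by
          funext k
          rw [eq_div_iff hc, div_mul_eq_mul_div, ← pow_succ]
        rw [hf]
        exact h2
    exact hsum.smul_const N

/-- (Closed form of the coupled-dimer characteristic response function,
Appendix E.) For the symmetric `2×2` complex matrix `M = !![A, b; b, D]`, any `w` with
`w² = (A-D)² + 4b²`, and `s = sinh(tw/2)/(tw/2)` (with `s = 1` when `tw = 0`), the quadratic
form of the matrix exponential satisfies
`(λ₁,λ₂)·exp(tM)·(λ₁,λ₂)ᵀ = e^{(A+D)t/2}[(λ₁²+λ₂²)cosh(tw/2) + s((λ₁²-λ₂²)(A-D)t/2 + 2λ₁λ₂bt)]`. -/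
theorem coupled_dimer_characteristic_function
    (A D b lam₁ lam₂ : ℂ) (t : ℝ) (w : ℂ)
    (hw : w ^ 2 = (A - D) ^ 2 + 4 * b ^ 2)
    (M : Matrix (Fin 2) (Fin 2) ℂ) (hM : M = !![A, b; b, D])
    (s : ℂ)
    (hs : s = if (t : ℂ) * w = 0 then 1
      else Complex.sinh ((t : ℂ) * w / 2) / ((t : ℂ) * w / 2)) :
    (![lam₁, lam₂] ⬝ᵥ (NormedSpace.exp ((t : ℂ) • M)).mulVec ![lam₁, lam₂]) =
      Complex.exp ((A + D) * t / 2) *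
        ((lam₁ ^ 2 + lam₂ ^ 2) * Complex.cosh ((t : ℂ) * w / 2)
          + s * ((lam₁ ^ 2 - lam₂ ^ 2) * (A - D) * t / 2 + 2 * lam₁ * lam₂ * b * t)) := by
  have hsplit : (t : ℂ) • M = ((A + D) * (t : ℂ) / 2) • (1 : Matrix (Fin 2) (Fin 2) ℂ)
      + !![(A - D) * t / 2, b * t; b * t, -((A - D) * t / 2)] := by
    subst hM
    ext i j
    fin_cases i <;> fin_cases j <;>
      simp [Matrix.one_apply, Matrix.smul_apply, smul_eq_mul] <;> ring
  have hN2 : (!![(A - D) * t / 2, b * t; b * t, -((A - D) * t / 2)]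
        : Matrix (Fin 2) (Fin 2) ℂ) ^ 2
      = ((t : ℂ) * w / 2) ^ 2 • (1 : Matrix (Fin 2) (Fin 2) ℂ) := by
    rw [pow_two]
    ext i j
    fin_cases i <;> fin_cases j <;>
      simp [Matrix.mul_apply, Fin.sum_univ_two, Matrix.one_apply, smul_eq_mul]
    · linear_combination (-(t : ℂ) ^ 2 / 4) * hw
    · ring
    · ring
    · linear_combination (-(t : ℂ) ^ 2 / 4) * hw
  have hceq : (t : ℂ) * w / 2 = 0 ↔ (t : ℂ) * w = 0 := by
    rw [div_eq_zero_iff]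
    simp
  have hs' : s = if (t : ℂ) * w / 2 = 0 then 1
      else Complex.sinh ((t : ℂ) * w / 2) / ((t : ℂ) * w / 2) := by
    rw [hs]
    by_cases h0 : (t : ℂ) * w = 0
    · rw [if_pos h0, if_pos (hceq.mpr h0)]
    · rw [if_neg h0, if_neg (fun h => h0 (hceq.mp h))]
  have hcomm : Commute (((A + D) * (t : ℂ) / 2) • (1 : Matrix (Fin 2) (Fin 2) ℂ))
      !![(A - D) * t / 2, b * t; b * t, -((A - D) * t / 2)] :=
    (Commute.one_left _).smul_left _
  have h1 : NormedSpace.exp (((A + D) * (t : ℂ) / 2) • (1 : Matrix (Fin 2) (Fin 2) ℂ))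
      = Complex.exp ((A + D) * (t : ℂ) / 2) • (1 : Matrix (Fin 2) (Fin 2) ℂ) := by
    rw [Matrix.smul_one_eq_diagonal, Matrix.exp_diagonal, Pi.exp_def]
    rw [← Complex.exp_eq_exp_ℂ, ← Matrix.smul_one_eq_diagonal]
  have h2 : NormedSpace.exp ((t : ℂ) • M)
      = Complex.exp ((A + D) * (t : ℂ) / 2) •
        (Complex.cosh ((t : ℂ) * w / 2) • (1 : Matrix (Fin 2) (Fin 2) ℂ)
          + s • !![(A - D) * t / 2, b * t; b * t, -((A - D) * t / 2)]) := by
    rw [hsplit, Matrix.exp_add_of_commute _ _ hcomm, h1,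
      exp_sq_smul_one _ _ _ hN2 hs', smul_one_mul]
  rw [h2]
  simp only [Matrix.mulVec, dotProduct, Fin.sum_univ_two, Matrix.add_apply,
    Matrix.smul_apply, Matrix.one_apply, smul_eq_mul, Matrix.cons_val', Matrix.cons_val_zero,
    Matrix.cons_val_one, Matrix.head_cons, Matrix.empty_val',
    Matrix.cons_val_fin_one, Matrix.of_apply, Matrix.vecHead, Matrix.vecTail]
  norm_num
  ring
end
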